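/- arXiv:2004.04638 — 10 statements merged into one kernel-verified Lean document; each statement's English description precedes it below -/
import Mathlib

section
/- If G is a connected graph, then for every vertex u of G, the set V(Ḡ) ∪ {u} is a hull set of the complementary prism GḠ; that is, the geodesic convex hull of V(Ḡ) ∪ {u} in GḠ equals V(GḠ). -/
open SimpleGraph

/-- Adjacency of the complementary prism: copies of `G` and `Gᶜ` joined by a perfect matching. -/
def prismAdj {V : Type*} (G : SimpleGraph V) : V ⊕ V → V ⊕ V → Prop
  | Sum.inl a, Sum.inl b => G.Adj a b
  | Sum.inr a, Sum.inr b => Gᶜ.Adj a b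
  | Sum.inl a, Sum.inr b => a = b
  | Sum.inr a, Sum.inl b => a = b

/-- The complementary prism `G G̅` of a graph `G`. -/
def compPrism {V : Type*} (G : SimpleGraph V) : SimpleGraph (V ⊕ V) where
  Adj := prismAdj G
  symm := by
    constructor
    rintro (a | a) (b | b) h
    · exact h.symm
    · exact h.symm
    · exact h.symm
    · exact h.symm
  loopless := by
    constructor
    rintro (a | a) h
    · exact G.loopless.irrefl a h
    · exact Gᶜ.loopless.irrefl a h

/-- `w` lies on some shortest `u,v`-path (geodesic) of `H`. -/
def inInterval {V : Type*} (H : SimpleGraph V) (u v w : V) : Prop :=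
  ∃ p : H.Walk u v, p.IsPath ∧ p.length = H.dist u v ∧ w ∈ p.support

/-- A set of vertices is geodesically convex. -/
def IsGeoConvex {V : Type*} (H : SimpleGraph V) (S : Set V) : Prop :=
  ∀ u ∈ S, ∀ v ∈ S, ∀ w, inInterval H u v w → w ∈ S

/-- The geodesic convex hull: the smallest convex set containing `S`. -/
def geoHull {V : Type*} (H : SimpleGraph V) (S : Set V) : Set V :=
  ⋂₀ {C | IsGeoConvex H C ∧ S ⊆ C}

/-- The convexity number: maximum cardinality of a proper convex set. -/
noncomputable def convexityNumber {V : Type*} (H : SimpleGraph V) : ℕ :=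
  sSup {n | ∃ S : Set V, IsGeoConvex H S ∧ S ≠ Set.univ ∧ S.ncard = n}

/-- The diameter of a graph. -/
noncomputable def graphDiam {V : Type*} (H : SimpleGraph V) : ℕ :=
  sSup {d | ∃ u v : V, H.dist u v = d}

/-- The eccentricity of a vertex. -/
noncomputable def graphEcc {V : Type*} (H : SimpleGraph V) (u : V) : ℕ :=
  sSup {d | ∃ v : V, H.dist u v = d}

/-- The degree of a vertex. -/
noncomputable def vdeg {V : Type*} (H : SimpleGraph V) (v : V) : ℕ :=
  (H.neighborSet v).ncard

/-- The maximum degree. -/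
noncomputable def maxDeg {V : Type*} (H : SimpleGraph V) : ℕ :=
  sSup {d | ∃ v : V, vdeg H v = d}

/-- The number of pendant neighbours of a vertex. -/
noncomputable def pendCount {V : Type*} (H : SimpleGraph V) (w : V) : ℕ :=
  {v ∈ H.neighborSet w | vdeg H v = 1}.ncard

theorem stmt0 {V : Type*} [Fintype V] (G : SimpleGraph V) (hG : G.Connected) (u : V) :
    geoHull (compPrism G) (Set.range Sum.inr ∪ {Sum.inl u}) = Set.univ := by
  apply Set.eq_univ_of_forall
  intro x
  intro C hC
  obtain ⟨hconv, hsub⟩ := hC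
  -- step lemma: if inl a ∈ C and G.Adj a b then inl b ∈ C
  have step : ∀ a b : V, G.Adj a b → Sum.inl a ∈ C → Sum.inl b ∈ C := by
    intro a b hab ha
    have hrb : (Sum.inr b : V ⊕ V) ∈ C := hsub (Or.inl ⟨b, rfl⟩)
    have h1 : (compPrism G).Adj (Sum.inl a) (Sum.inl b) := hab
    have h2 : (compPrism G).Adj (Sum.inl b) (Sum.inr b) := rfl
    set p : (compPrism G).Walk (Sum.inl a) (Sum.inr b) :=
      SimpleGraph.Walk.cons h1 (SimpleGraph.Walk.cons h2 SimpleGraph.Walk.nil) with hp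
    have hlen : p.length = 2 := rfl
    have hdle : (compPrism G).dist (Sum.inl a) (Sum.inr b) ≤ 2 := by
      simpa [hlen] using SimpleGraph.dist_le p
    have hne : (Sum.inl a : V ⊕ V) ≠ Sum.inr b := by simp
    have hreach : (compPrism G).Reachable (Sum.inl a) (Sum.inr b) := ⟨p⟩
    have hd0 : (compPrism G).dist (Sum.inl a) (Sum.inr b) ≠ 0 := by
      intro h
      exact hne ((SimpleGraph.Reachable.dist_eq_zero_iff hreach).mp h)
    have hd1 : (compPrism G).dist (Sum.inl a) (Sum.inr b) ≠ 1 := by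
      intro h
      have : (compPrism G).Adj (Sum.inl a) (Sum.inr b) :=
        SimpleGraph.dist_eq_one_iff_adj.mp h
      have : a = b := this
      exact hab.ne this
    have hd : (compPrism G).dist (Sum.inl a) (Sum.inr b) = 2 := by omega
    have hplen : p.length = (compPrism G).dist (Sum.inl a) (Sum.inr b) := by
      rw [hd]; exact hlen
    have hpath : p.IsPath := p.isPath_of_length_eq_dist hplen
    have hmem : (Sum.inl b : V ⊕ V) ∈ p.support := by
      simp [hp]
    exact hconv _ ha _ hrb _ ⟨p, hpath, hplen, hmem⟩
  have hwalk : ∀ {a b : V}, G.Walk a b → Sum.inl a ∈ C → Sum.inl b ∈ C := by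
    intro a b w
    induction w with
    | nil => exact id
    | cons h p ih => intro ha; exact ih (step _ _ h ha)
  cases x with
  | inl v =>
    obtain ⟨w⟩ := hG.preconnected u v
    exact hwalk w (hsub (Or.inr rfl))
  | inr v => exact hsub (Or.inl ⟨v, rfl⟩)
end

section
/- Let G be a graph, S a subset of V(GḠ), and v₁, v₂, ..., v_k a path in G with k ≥ 2. If {v₁, v̄₂, ..., v̄_k} is contained in the convex hull of S in GḠ, then v_k belongs to the convex hull of S in GḠ. -/
open SimpleGraph

lemma geoHull_convex {V : Type*} (H : SimpleGraph V) (S : Set V) :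
    IsGeoConvex H (geoHull H S) := by
  intro u hu v hv w hw
  intro C hC
  exact hC.1 u (hu C hC) v (hv C hC) w hw

lemma mid_mem_hull {V : Type*} (H : SimpleGraph V) (S : Set V) {u v x : V}
    (hu : u ∈ geoHull H S) (hv : v ∈ geoHull H S)
    (hux : H.Adj u x) (hxv : H.Adj x v) (huv : ¬ H.Adj u v) (hne : u ≠ v) :
    x ∈ geoHull H S := by
  have hw : inInterval H u v x := by
    refine ⟨Walk.cons hux (Walk.cons hxv Walk.nil), ?_, ?_, ?_⟩
    · simp [Walk.isPath_def, hux.ne, hxv.ne, hne]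
    · have hr : H.Reachable u v := ⟨Walk.cons hux (Walk.cons hxv Walk.nil)⟩
      have h2 : H.dist u v ≤ 2 := by
        have := SimpleGraph.dist_le (Walk.cons hux (Walk.cons hxv Walk.nil))
        simpa using this
      have h0 : 0 < H.dist u v := hr.pos_dist_of_ne hne
      have h1 : H.dist u v ≠ 1 := fun h => huv (SimpleGraph.dist_eq_one_iff_adj.mp h)
      simp only [Walk.length_cons, Walk.length_nil]
      omega
    · simp
  exact geoHull_convex H S u hu v hv x hw

theorem stmt1 {V : Type*} [Fintype V] (G : SimpleGraph V) (S : Set (V ⊕ V))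
    (k : ℕ) (hk : 2 ≤ k) (p : ℕ → V)
    (hadj : ∀ i, i + 1 < k → G.Adj (p i) (p (i + 1)))
    (hinj : ∀ i j, i < k → j < k → p i = p j → i = j)
    (h0 : Sum.inl (p 0) ∈ geoHull (compPrism G) S)
    (hrest : ∀ i, 1 ≤ i → i < k → Sum.inr (p i) ∈ geoHull (compPrism G) S) :
    Sum.inl (p (k - 1)) ∈ geoHull (compPrism G) S := by
  have key : ∀ i, i < k → Sum.inl (p i) ∈ geoHull (compPrism G) S := by
    intro i
    induction i with
    | zero => intro _; exact h0
    | succ n ih =>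
      intro hn
      have hIH := ih (by omega)
      have hr := hrest (n + 1) (by omega) hn
      refine mid_mem_hull (compPrism G) S hIH hr ?_ ?_ ?_ ?_
      · exact hadj n hn
      · show prismAdj G (Sum.inl (p (n+1))) (Sum.inr (p (n+1)))
        rfl
      · intro h
        have : p n = p (n + 1) := h
        have := hinj n (n+1) (by omega) hn this
        omega
      · simp
  exact key (k - 1) (by omega)
end

section
/- Let T be a tree with diameter at least 3. If u and v are vertices of T with d_T(u,v) = 3, then the convex hull of {u,v} in the complementary prism TT̄ is the entire vertex set V(TT̄). -/
open SimpleGraph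

@[simp] lemma compPrism_adj_ll {V : Type*} {G : SimpleGraph V} {a b : V} :
    (compPrism G).Adj (Sum.inl a) (Sum.inl b) ↔ G.Adj a b := Iff.rfl

@[simp] lemma compPrism_adj_rr {V : Type*} {G : SimpleGraph V} {a b : V} :
    (compPrism G).Adj (Sum.inr a) (Sum.inr b) ↔ a ≠ b ∧ ¬ G.Adj a b := G.compl_adj a b

@[simp] lemma compPrism_adj_lr {V : Type*} {G : SimpleGraph V} {a b : V} :
    (compPrism G).Adj (Sum.inl a) (Sum.inr b) ↔ a = b := Iff.rfl

@[simp] lemma compPrism_adj_rl {V : Type*} {G : SimpleGraph V} {a b : V} :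
    (compPrism G).Adj (Sum.inr a) (Sum.inl b) ↔ a = b := Iff.rfl

lemma subset_geoHull {V : Type*} (H : SimpleGraph V) (S : Set V) : S ⊆ geoHull H S :=
  fun _x hx => Set.mem_sInter.mpr fun _C hC => hC.2 hx

lemma geoHull_step {V : Type*} {H : SimpleGraph V} {S : Set V} {a b w : V}
    (ha : a ∈ geoHull H S) (hb : b ∈ geoHull H S) (h : inInterval H a b w) :
    w ∈ geoHull H S :=
  Set.mem_sInter.mpr fun C hC =>
    hC.1 a (Set.mem_sInter.mp ha C hC) b (Set.mem_sInter.mp hb C hC) w h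

lemma my_dist_eq_two {V : Type*} {H : SimpleGraph V} {x y z : V}
    (hxy : x ≠ y) (hnadj : ¬ H.Adj x y) (h1 : H.Adj x z) (h2 : H.Adj z y) :
    H.dist x y = 2 := by
  have hr : H.Reachable x y := ⟨Walk.cons h1 (Walk.cons h2 Walk.nil)⟩
  have hle := SimpleGraph.dist_le (Walk.cons h1 (Walk.cons h2 Walk.nil))
  simp only [Walk.length_cons, Walk.length_nil] at hle
  have h0 : H.dist x y ≠ 0 := fun h => hxy (hr.dist_eq_zero_iff.mp h)
  have h1' : H.dist x y ≠ 1 := fun h => hnadj (dist_eq_one_iff_adj.mp h)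
  omega

lemma my_dist_eq_three {V : Type*} {H : SimpleGraph V} {x y : V} (p : H.Walk x y)
    (hp : p.length = 3) (hxy : x ≠ y) (hnadj : ¬ H.Adj x y)
    (hcn : ∀ z, ¬ (H.Adj x z ∧ H.Adj z y)) :
    H.dist x y = 3 := by
  have hr : H.Reachable x y := ⟨p⟩
  have hle := SimpleGraph.dist_le p
  rw [hp] at hle
  have h0 : H.dist x y ≠ 0 := fun h => hxy (hr.dist_eq_zero_iff.mp h)
  have h1' : H.dist x y ≠ 1 := fun h => hnadj (dist_eq_one_iff_adj.mp h)
  have h2 : H.dist x y ≠ 2 := by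
    intro h
    obtain ⟨q, hq⟩ := hr.exists_walk_length_eq_dist
    rw [h] at hq
    cases q with
    | nil => simp at hq
    | cons ha q' =>
      cases q' with
      | nil => simp at hq
      | cons hb q'' =>
        cases q'' with
        | nil => exact hcn _ ⟨ha, hb⟩
        | cons hc q3 => simp only [Walk.length_cons] at hq; omega
  omega

lemma geoHull_mid {V : Type*} {H : SimpleGraph V} {S : Set V} {x y z : V}
    (hx : x ∈ geoHull H S) (hy : y ∈ geoHull H S)
    (hxy : x ≠ y) (hnadj : ¬ H.Adj x y)
    (h1 : H.Adj x z) (h2 : H.Adj z y) :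
    z ∈ geoHull H S := by
  refine geoHull_step hx hy ⟨Walk.cons h1 (Walk.cons h2 Walk.nil), ?_, ?_, ?_⟩
  · simp [Walk.isPath_def, hxy, h1.ne, h2.ne]
  · simp [my_dist_eq_two hxy hnadj h1 h2]
  · simp

theorem stmt2 {V : Type*} [Fintype V] (T : SimpleGraph V) (hT : T.IsTree)
    (hd : 3 ≤ graphDiam T) (u v : V) (huv : T.dist u v = 3) :
    geoHull (compPrism T) {Sum.inl u, Sum.inl v} = Set.univ := by
  classical
  have hconn : T.Connected := hT.isConnected
  -- extract the path u - a - b - v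
  obtain ⟨p, hp⟩ := (hconn u v).exists_walk_length_eq_dist
  rw [huv] at hp
  obtain ⟨a, hua, p1⟩ : ∃ a, T.Adj u a ∧ ∃ q : T.Walk a v, q.length = 2 := by
    cases p with
    | nil => simp at hp
    | cons h q => exact ⟨_, h, q, by simpa using hp⟩
  obtain ⟨q, hq⟩ := p1
  obtain ⟨b, hab, hbv⟩ : ∃ b, T.Adj a b ∧ T.Adj b v := by
    cases q with
    | nil => simp at hq
    | cons h q' =>
      cases q' with
      | nil => simp at hq
      | cons h' q'' =>
        cases q'' with
        | nil => exact ⟨_, h, h'⟩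
        | cons _ _ => simp only [Walk.length_cons] at hq; omega
  -- basic non-adjacency and distinctness facts
  have hnuv : ¬ T.Adj u v := fun h => by
    have := dist_eq_one_iff_adj.mpr h; omega
  have hnub : ¬ T.Adj u b := fun h => by
    have := SimpleGraph.dist_le (Walk.cons h (Walk.cons hbv Walk.nil))
    simp only [Walk.length_cons, Walk.length_nil] at this; omega
  have hnav : ¬ T.Adj a v := fun h => by
    have := SimpleGraph.dist_le (Walk.cons hua (Walk.cons h Walk.nil))
    simp only [Walk.length_cons, Walk.length_nil] at this; omega
  have huv' : u ≠ v := fun h => by subst h; simp [SimpleGraph.dist_self] at huv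
  have hua' : u ≠ a := hua.ne
  have hab' : a ≠ b := hab.ne
  have hbv' : b ≠ v := hbv.ne
  have hub' : u ≠ b := fun h => hnuv (h ▸ hbv)
  have hav' : a ≠ v := fun h => hnuv (h ▸ hua)
  have hu : Sum.inl u ∈ geoHull (compPrism T) {Sum.inl u, Sum.inl v} :=
    subset_geoHull _ _ (by simp)
  have hv : Sum.inl v ∈ geoHull (compPrism T) {Sum.inl u, Sum.inl v} :=
    subset_geoHull _ _ (by simp)
  -- dist in the prism between inl u and inl v is 3
  have hd3 : (compPrism T).dist (Sum.inl u) (Sum.inl v) = 3 := by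
    refine my_dist_eq_three
      (Walk.cons (compPrism_adj_ll.mpr hua)
        (Walk.cons (compPrism_adj_ll.mpr hab)
          (Walk.cons (compPrism_adj_ll.mpr hbv) Walk.nil))) (by simp)
      (by simp [huv']) (by simp [hnuv]) ?_
    rintro (w | w) ⟨h1, h2⟩
    · rw [compPrism_adj_ll] at h1 h2
      have := SimpleGraph.dist_le (Walk.cons h1 (Walk.cons h2 Walk.nil))
      simp only [Walk.length_cons, Walk.length_nil] at this; omega
    · rw [compPrism_adj_lr] at h1
      rw [compPrism_adj_rl] at h2
      exact huv' (h1.trans h2)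
  -- geodesic 1 : inl u - inl a - inl b - inl v
  have hgeo1 : ∀ w ∈ (Walk.cons (compPrism_adj_ll.mpr hua)
      (Walk.cons (compPrism_adj_ll.mpr hab)
        (Walk.cons (compPrism_adj_ll.mpr hbv) (Walk.nil)))
          : (compPrism T).Walk (Sum.inl u) (Sum.inl v)).support,
      w ∈ geoHull (compPrism T) {Sum.inl u, Sum.inl v} := by
    intro w hw
    refine geoHull_step hu hv ⟨_, ?_, ?_, hw⟩
    · simp [Walk.isPath_def, hua', hub', huv', hab', hav', hbv']
    · simp [hd3]
  have hA : Sum.inl a ∈ geoHull (compPrism T) {Sum.inl u, Sum.inl v} := hgeo1 _ (by simp)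
  have hB : Sum.inl b ∈ geoHull (compPrism T) {Sum.inl u, Sum.inl v} := hgeo1 _ (by simp)
  -- geodesic 2 : inl u - inr u - inr v - inl v
  have hgeo2 : ∀ w ∈ (Walk.cons (compPrism_adj_lr.mpr rfl)
      (Walk.cons (compPrism_adj_rr.mpr ⟨huv', hnuv⟩)
        (Walk.cons (compPrism_adj_rl.mpr rfl) (Walk.nil)))
          : (compPrism T).Walk (Sum.inl u) (Sum.inl v)).support,
      w ∈ geoHull (compPrism T) {Sum.inl u, Sum.inl v} := by
    intro w hw
    refine geoHull_step hu hv ⟨_, ?_, ?_, hw⟩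
    · simp [Walk.isPath_def, huv']
    · simp [hd3]
  have hRu : Sum.inr u ∈ geoHull (compPrism T) {Sum.inl u, Sum.inl v} := hgeo2 _ (by simp)
  have hRv : Sum.inr v ∈ geoHull (compPrism T) {Sum.inl u, Sum.inl v} := hgeo2 _ (by simp)
  -- inr a : midpoint of inr v - inr a - inl a
  have hRa : Sum.inr a ∈ geoHull (compPrism T) {Sum.inl u, Sum.inl v} := by
    refine geoHull_mid hRv hA (by simp) (by simp [Ne.symm hav']) ?_ ?_
    · exact compPrism_adj_rr.mpr ⟨Ne.symm hav', fun h => hnav h.symm⟩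
    · exact compPrism_adj_rl.mpr rfl
  -- inr b : midpoint of inr u - inr b - inl b
  have hRb : Sum.inr b ∈ geoHull (compPrism T) {Sum.inl u, Sum.inl v} := by
    refine geoHull_mid hRu hB (by simp) (by simp [hub']) ?_ ?_
    · exact compPrism_adj_rr.mpr ⟨hub', hnub⟩
    · exact compPrism_adj_rl.mpr rfl
  -- step lemma for inr vertices
  have inr_step : ∀ p q x : V, T.Adj p q → x ≠ p → x ≠ q → ¬ T.Adj x p → ¬ T.Adj x q →
      Sum.inr p ∈ geoHull (compPrism T) {Sum.inl u, Sum.inl v} →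
      Sum.inr q ∈ geoHull (compPrism T) {Sum.inl u, Sum.inl v} →
      Sum.inr x ∈ geoHull (compPrism T) {Sum.inl u, Sum.inl v} := by
    intro p q x hpq hxp hxq hnxp hnxq hp' hq'
    refine geoHull_mid hp' hq' (by simp [hpq.ne]) (by simp [hpq]) ?_ ?_
    · exact compPrism_adj_rr.mpr ⟨Ne.symm hxp, fun h => hnxp h.symm⟩
    · exact compPrism_adj_rr.mpr ⟨hxq, hnxq⟩
  -- tree uniqueness: auxiliary contradictions
  have unique := hT.existsUnique_path
  have pair1 : ∀ x, x ≠ u → x ≠ a → T.Adj x u → T.Adj x a → False := by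
    intro x hxu hxa h1 h2
    have hp1 : (Walk.cons h1.symm (Walk.cons h2 Walk.nil) : T.Walk u a).IsPath := by
      simp [Walk.isPath_def, Ne.symm hxu, hua', h2.ne]
    have hp2 : (Walk.cons hua Walk.nil : T.Walk u a).IsPath := by
      simp [Walk.isPath_def, hua']
    have e := (unique u a).unique hp1 hp2
    have := congrArg Walk.length e
    simp at this
  have pair2 : ∀ x, x ≠ a → x ≠ b → T.Adj x a → T.Adj x b → False := by
    intro x hxa hxb h1 h2
    have hp1 : (Walk.cons h1.symm (Walk.cons h2 Walk.nil) : T.Walk a b).IsPath := by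
      simp [Walk.isPath_def, Ne.symm hxa, hab', h2.ne]
    have hp2 : (Walk.cons hab Walk.nil : T.Walk a b).IsPath := by
      simp [Walk.isPath_def, hab']
    have e := (unique a b).unique hp1 hp2
    have := congrArg Walk.length e
    simp at this
  have pair5 : ∀ x, x ≠ a → x ≠ b → x ≠ v → T.Adj x a → T.Adj x v → False := by
    intro x hxa hxb hxv h1 h2
    have hp1 : (Walk.cons h1.symm (Walk.cons h2 Walk.nil) : T.Walk a v).IsPath := by
      simp [Walk.isPath_def, Ne.symm hxa, hxv, hav']
    have hp2 : (Walk.cons hab (Walk.cons hbv Walk.nil) : T.Walk a v).IsPath := by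
      simp [Walk.isPath_def, hab', hav', hbv']
    have e := (unique a v).unique hp1 hp2
    have := congrArg Walk.support e
    simp at this
    exact hxb this
  have pair6 : ∀ x, x ≠ u → x ≠ a → x ≠ b → T.Adj x u → T.Adj x b → False := by
    intro x hxu hxa hxb h1 h2
    have hp1 : (Walk.cons h1.symm (Walk.cons h2 Walk.nil) : T.Walk u b).IsPath := by
      simp [Walk.isPath_def, Ne.symm hxu, hxb, hub']
    have hp2 : (Walk.cons hua (Walk.cons hab Walk.nil) : T.Walk u b).IsPath := by
      simp [Walk.isPath_def, hua', hub', hab']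
    have e := (unique u b).unique hp1 hp2
    have := congrArg Walk.support e
    simp at this
    exact hxa this
  -- all inr vertices are in the hull
  have all_inr : ∀ x, Sum.inr x ∈ geoHull (compPrism T) {Sum.inl u, Sum.inl v} := by
    intro x
    by_cases hxu : x = u; · subst hxu; exact hRu
    by_cases hxa : x = a; · subst hxa; exact hRa
    by_cases hxb : x = b; · subst hxb; exact hRb
    by_cases hxv : x = v; · subst hxv; exact hRv
    by_cases h1 : T.Adj x u
    · have h2 : ¬ T.Adj x a := fun h => pair1 x hxu hxa h1 h
      have h3 : ¬ T.Adj x b := fun h => pair6 x hxu hxa hxb h1 h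
      exact inr_step a b x hab hxa hxb h2 h3 hRa hRb
    by_cases h2 : T.Adj x a
    · have h3 : ¬ T.Adj x b := fun h => pair2 x hxa hxb h2 h
      have h4 : ¬ T.Adj x v := fun h => pair5 x hxa hxb hxv h2 h
      exact inr_step b v x hbv hxb hxv h3 h4 hRb hRv
    · exact inr_step u a x hua hxu hxa h1 h2 hRu hRa
  -- step lemma for inl vertices
  have inl_step : ∀ p x : V, T.Adj p x →
      Sum.inl p ∈ geoHull (compPrism T) {Sum.inl u, Sum.inl v} →
      Sum.inl x ∈ geoHull (compPrism T) {Sum.inl u, Sum.inl v} := by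
    intro p x hpx hp'
    refine geoHull_mid hp' (all_inr x) (by simp) (by simp [hpx.ne]) ?_ ?_
    · exact compPrism_adj_ll.mpr hpx
    · exact compPrism_adj_lr.mpr rfl
  -- propagate along walks from u
  have key : ∀ (y x : V) (w : T.Walk y x),
      Sum.inl y ∈ geoHull (compPrism T) {Sum.inl u, Sum.inl v} →
      Sum.inl x ∈ geoHull (compPrism T) {Sum.inl u, Sum.inl v} := by
    intro y x w
    induction w with
    | nil => exact id
    | cons h w ih => intro hy; exact ih (inl_step _ _ h hy)
  have all_inl : ∀ x, Sum.inl x ∈ geoHull (compPrism T) {Sum.inl u, Sum.inl v} := fun x =>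
    key u x (hconn u x).some hu
  ext z
  simp only [Set.mem_univ, iff_true]
  cases z with
  | inl x => exact all_inl x
  | inr x => exact all_inr x
end

section
/- Let T be a tree with diameter at least 6. Then for any pair of adjacent vertices u, v of T, the copy V(T̄) of the vertex set of the complement is contained in the convex hull of {ū, v̄} in the complementary prism TT̄. -/
open SimpleGraph

-- aux lemmas
section AuxHull
open Sum
variable {V : Type*} {T : SimpleGraph V}

lemma prism_adj_inr {a b : V} (h1 : a ≠ b) (h2 : ¬T.Adj a b) :
    (compPrism T).Adj (inr a) (inr b) := by
  show Tᶜ.Adj a b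
  exact ⟨h1, h2⟩

lemma prism_not_adj_inr {b c : V} (h : T.Adj b c) :
    ¬ (compPrism T).Adj (inr b) (inr c) := by
  intro hc
  have h2 : Tᶜ.Adj b c := hc
  exact h2.2 h

lemma two_le_ne_not_adj {a b : V} (h : 2 ≤ T.dist a b) : a ≠ b ∧ ¬ T.Adj a b := by
  constructor
  · rintro rfl; simp [SimpleGraph.dist_self] at h
  · intro hadj
    have := SimpleGraph.dist_eq_one_iff_adj.mpr hadj
    omega

lemma base_mem {u v : V} : inr u ∈ geoHull (compPrism T) {inr u, inr v} := by
  intro C hC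
  exact hC.2 (by left; rfl)

lemma base_mem' {u v : V} : inr v ∈ geoHull (compPrism T) {inr u, inr v} := by
  intro C hC
  exact hC.2 (by right; rfl)

/-- Lemma A: closure step. -/
lemma hull_step {u v a b c : V} (hbc : T.Adj b c)
    (h1 : 2 ≤ T.dist a b) (h2 : 2 ≤ T.dist a c)
    (hb : inr b ∈ geoHull (compPrism T) {inr u, inr v})
    (hc : inr c ∈ geoHull (compPrism T) {inr u, inr v}) :
    inr a ∈ geoHull (compPrism T) {inr u, inr v} := by
  obtain ⟨hab, hab'⟩ := two_le_ne_not_adj h1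
  obtain ⟨hac, hac'⟩ := two_le_ne_not_adj h2
  intro C hC
  refine hC.1 _ (hb C hC) _ (hc C hC) _ ?_
  have e1 : (compPrism T).Adj (inr b) (inr a) :=
    prism_adj_inr (Ne.symm hab) (fun h => hab' (h.symm))
  have e2 : (compPrism T).Adj (inr a) (inr c) := prism_adj_inr hac hac'
  refine ⟨Walk.cons e1 (Walk.cons e2 Walk.nil), ?_, ?_, ?_⟩
  · simp [Walk.isPath_def, hab.symm, hac, hbc.ne]
  · have hle : (compPrism T).dist (inr b) (inr c) ≤ 2 := by
      have := SimpleGraph.dist_le (Walk.cons e1 (Walk.cons e2 Walk.nil))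
      simpa using this
    have hreach : (compPrism T).Reachable (inr b) (inr c) :=
      (Walk.cons e1 (Walk.cons e2 Walk.nil)).reachable
    have hne : (inr b : V ⊕ V) ≠ inr c := by simp [hbc.ne]
    have hpos : 0 < (compPrism T).dist (inr b) (inr c) :=
      hreach.pos_dist_of_ne hne
    have hne1 : (compPrism T).dist (inr b) (inr c) ≠ 1 := by
      intro h
      exact prism_not_adj_inr hbc (SimpleGraph.dist_eq_one_iff_adj.mp h)
    simp only [Walk.length_cons, Walk.length_nil]
    omega
  · simp

lemma exists_adj_of_ne (hconn : T.Connected) {z w : V} (h : z ≠ w) : ∃ m, T.Adj z m := by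
  obtain ⟨p⟩ := hconn z w
  cases p with
  | nil => exact absurd rfl h
  | cons h' _ => exact ⟨_, h'⟩

lemma exists_far_pair [Fintype V] (hconn : T.Connected) (hd : 6 ≤ graphDiam T) :
    ∃ x y : V, 6 ≤ T.dist x y := by
  classical
  rcases isEmpty_or_nonempty V with hV | hV
  · exfalso
    have : {d | ∃ u v : V, T.dist u v = d} = ∅ := by
      ext d
      simp only [Set.mem_setOf_eq, Set.mem_empty_iff_false, iff_false]
      rintro ⟨u, -, -⟩
      exact hV.elim u
    rw [graphDiam, this] at hd
    simp at hd
  · have hSne : {d | ∃ u v : V, T.dist u v = d}.Nonempty := by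
      obtain ⟨x⟩ := hV
      exact ⟨T.dist x x, x, x, rfl⟩
    have hbdd : BddAbove {d | ∃ u v : V, T.dist u v = d} := by
      refine ⟨Fintype.card V, ?_⟩
      rintro d ⟨x, y, rfl⟩
      obtain ⟨p⟩ := hconn x y
      have h1 := SimpleGraph.dist_le p.bypass
      have h2 := p.bypass_isPath.length_lt
      omega
    have := Nat.sSup_mem hSne hbdd
    obtain ⟨x, y, hxy⟩ := this
    exact ⟨x, y, by rw [hxy]; exact hd⟩

lemma exists_far_vertex (hconn : T.Connected) (hfar : ∃ x y : V, 6 ≤ T.dist x y)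
    {p q : V} (hpq : T.dist p q ≤ 1) :
    ∃ z w : V, 6 ≤ T.dist z w ∧ 3 ≤ T.dist p z ∧ 3 ≤ T.dist q z := by
  classical
  obtain ⟨x, y, hxy⟩ := hfar
  by_cases h1 : 3 ≤ T.dist p x ∧ 3 ≤ T.dist q x
  · exact ⟨x, y, hxy, h1.1, h1.2⟩
  by_cases h2 : 3 ≤ T.dist p y ∧ 3 ≤ T.dist q y
  · exact ⟨y, x, by rwa [SimpleGraph.dist_comm], h2.1, h2.2⟩
  exfalso
  have t1 : T.dist x y ≤ T.dist x p + T.dist p y := hconn.dist_triangle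
  have t2 : T.dist x y ≤ T.dist x q + T.dist q y := hconn.dist_triangle
  have t3 : T.dist p y ≤ T.dist p q + T.dist q y := hconn.dist_triangle
  have t4 : T.dist q y ≤ T.dist q p + T.dist p y := hconn.dist_triangle
  have c1 : T.dist x p = T.dist p x := SimpleGraph.dist_comm ..
  have c2 : T.dist x q = T.dist q x := SimpleGraph.dist_comm ..
  have c3 : T.dist q p = T.dist p q := SimpleGraph.dist_comm ..
  omega

end AuxHull

section MainHull
open Sum
variable {V : Type*} {T : SimpleGraph V}

lemma main_step (hconn : T.Connected) (hfar : ∃ x y : V, 6 ≤ T.dist x y)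
    {u v a : V} (huv : T.Adj u v) (hua : T.Adj u a) :
    inr a ∈ geoHull (compPrism T) {inr u, inr v} := by
  have hau : T.dist a u ≤ 1 := by
    rw [SimpleGraph.dist_comm]
    exact le_of_eq (SimpleGraph.dist_eq_one_iff_adj.mpr hua)
  obtain ⟨z, z₂, hzz₂, haz, huz⟩ := exists_far_vertex hconn hfar hau
  have duv : T.dist u v = 1 := SimpleGraph.dist_eq_one_iff_adj.mpr huv
  have dvu : T.dist v u = 1 := by rw [SimpleGraph.dist_comm]; exact duv
  have hvz : 2 ≤ T.dist v z := by
    have t : T.dist u z ≤ T.dist u v + T.dist v z := hconn.dist_triangle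
    omega
  have hzB : inr z ∈ geoHull (compPrism T) {inr u, inr v} :=
    hull_step huv (by rw [SimpleGraph.dist_comm]; omega)
      (by rw [SimpleGraph.dist_comm]; omega) base_mem base_mem'
  have hzne : z ≠ z₂ := by
    rintro rfl
    rw [SimpleGraph.dist_self] at hzz₂
    omega
  obtain ⟨m, hzm⟩ := exists_adj_of_ne hconn hzne
  have dzm : T.dist z m = 1 := SimpleGraph.dist_eq_one_iff_adj.mpr hzm
  have dmz : T.dist m z = 1 := by rw [SimpleGraph.dist_comm]; exact dzm
  have ham : 2 ≤ T.dist a m := by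
    have t : T.dist a z ≤ T.dist a m + T.dist m z := hconn.dist_triangle
    omega
  have hum : 2 ≤ T.dist u m := by
    have t : T.dist u z ≤ T.dist u m + T.dist m z := hconn.dist_triangle
    omega
  have hmB : inr m ∈ geoHull (compPrism T) {inr u, inr v} := by
    by_cases hvm : 2 ≤ T.dist v m
    · exact hull_step huv (by rw [SimpleGraph.dist_comm]; omega)
        (by rw [SimpleGraph.dist_comm]; omega) base_mem base_mem'
    · -- every route: m close to v; use far endpoint z₂
      have dmz₂ : 5 ≤ T.dist m z₂ := by
        have t : T.dist z z₂ ≤ T.dist z m + T.dist m z₂ := hconn.dist_triangle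
        omega
      have dvz₂ : 4 ≤ T.dist v z₂ := by
        have t : T.dist m z₂ ≤ T.dist m v + T.dist v z₂ := hconn.dist_triangle
        have c : T.dist m v = T.dist v m := SimpleGraph.dist_comm ..
        omega
      have duz₂ : 3 ≤ T.dist u z₂ := by
        have t : T.dist v z₂ ≤ T.dist v u + T.dist u z₂ := hconn.dist_triangle
        omega
      have hz₂ne : z₂ ≠ z := Ne.symm hzne
      obtain ⟨n, hz₂n⟩ := exists_adj_of_ne hconn hz₂ne
      have dnz₂ : T.dist n z₂ = 1 := by
        rw [SimpleGraph.dist_comm]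
        exact SimpleGraph.dist_eq_one_iff_adj.mpr hz₂n
      have hun : 2 ≤ T.dist u n := by
        have t : T.dist u z₂ ≤ T.dist u n + T.dist n z₂ := hconn.dist_triangle
        omega
      have hvn : 2 ≤ T.dist v n := by
        have t : T.dist v z₂ ≤ T.dist v n + T.dist n z₂ := hconn.dist_triangle
        omega
      have hz₂B : inr z₂ ∈ geoHull (compPrism T) {inr u, inr v} :=
        hull_step huv (by rw [SimpleGraph.dist_comm]; omega)
          (by rw [SimpleGraph.dist_comm]; omega) base_mem base_mem'
      have hnB : inr n ∈ geoHull (compPrism T) {inr u, inr v} :=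
        hull_step huv (by rw [SimpleGraph.dist_comm]; omega)
          (by rw [SimpleGraph.dist_comm]; omega) base_mem base_mem'
      refine hull_step hz₂n (by omega) ?_ hz₂B hnB
      have t : T.dist m z₂ ≤ T.dist m n + T.dist n z₂ := hconn.dist_triangle
      omega
  exact hull_step hzm (by omega) ham hzB hmB

private theorem stmt3_aux {V : Type*} [Fintype V] (T : SimpleGraph V) (hT : T.IsTree)
    (hd : 6 ≤ graphDiam T) (u v : V) (huv : T.Adj u v) :
    Set.range Sum.inr ⊆ geoHull (compPrism T) {Sum.inr u, Sum.inr v} := by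
  classical
  have hconn := hT.isConnected
  have hfar := exists_far_pair hconn hd
  rintro _ ⟨a, rfl⟩
  by_cases hau : a = u
  · subst hau; exact base_mem
  by_cases hav : a = v
  · subst hav; exact base_mem'
  by_cases h1 : 2 ≤ T.dist u a
  · by_cases h2 : 2 ≤ T.dist v a
    · exact hull_step huv (by rw [SimpleGraph.dist_comm]; omega)
        (by rw [SimpleGraph.dist_comm]; omega) base_mem base_mem'
    · have hd1 : T.dist v a = 1 := by
        have hpos := hconn.pos_dist_of_ne (v := a) (Ne.symm hav)
        omega
      have hva : T.Adj v a := SimpleGraph.dist_eq_one_iff_adj.mp hd1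
      have h := main_step hconn hfar huv.symm hva
      rwa [Set.pair_comm] at h
  · have hd1 : T.dist u a = 1 := by
      have hpos := hconn.pos_dist_of_ne (v := a) (Ne.symm hau)
      omega
    exact main_step hconn hfar huv (SimpleGraph.dist_eq_one_iff_adj.mp hd1)

end MainHull

theorem stmt3 {V : Type*} [Fintype V] (T : SimpleGraph V) (hT : T.IsTree)
    (hd : 6 ≤ graphDiam T) (u v : V) (huv : T.Adj u v) :
    Set.range Sum.inr ⊆ geoHull (compPrism T) {Sum.inr u, Sum.inr v} :=
  stmt3_aux T hT hd u v huv
end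

section
/- Let T be a tree with diameter 5, and let u, v, w be three vertices of T such that v is adjacent to both u and w. Then V(T̄) is contained in the convex hull of {ū, v̄, w̄} in the complementary prism TT̄. -/
open SimpleGraph

lemma midUnique {V : Type*} {T : SimpleGraph V} (hT : T.IsAcyclic) {a b m m' : V}
    (hab : a ≠ b) (h1 : T.Adj a m) (h2 : T.Adj m b) (h3 : T.Adj a m') (h4 : T.Adj m' b) :
    m = m' := by
  have hp : (Walk.cons h1 (Walk.cons h2 Walk.nil) : T.Walk a b).IsPath := by
    simp [Walk.isPath_def, h1.ne, h2.ne, hab]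
  have hq : (Walk.cons h3 (Walk.cons h4 Walk.nil) : T.Walk a b).IsPath := by
    simp [Walk.isPath_def, h3.ne, h4.ne, hab]
  have heq := hT.path_unique ⟨_, hp⟩ ⟨_, hq⟩
  have hs := congrArg (fun r : T.Path a b => (r : T.Walk a b).support) heq
  simpa using hs

lemma key {V : Type*} {T : SimpleGraph V} {C : Set (V ⊕ V)}
    (hconv : IsGeoConvex (compPrism T) C) {a b x : V}
    (ha : Sum.inr a ∈ C) (hb : Sum.inr b ∈ C) (hab : T.Adj a b)
    (h1 : ¬ T.Adj x a) (h2 : ¬ T.Adj x b) (h3 : x ≠ a) (h4 : x ≠ b) :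
    Sum.inr x ∈ C := by
  have hax : (compPrism T).Adj (Sum.inr a) (Sum.inr x) := by
    show Tᶜ.Adj a x
    rw [compl_adj]
    exact ⟨Ne.symm h3, fun h => h1 h.symm⟩
  have hxb : (compPrism T).Adj (Sum.inr x) (Sum.inr b) := by
    show Tᶜ.Adj x b
    rw [compl_adj]
    exact ⟨h4, h2⟩
  have hnab : ¬ (compPrism T).Adj (Sum.inr a) (Sum.inr b) := by
    show ¬ Tᶜ.Adj a b
    rw [compl_adj]
    exact fun h => h.2 hab
  set p : (compPrism T).Walk (Sum.inr a) (Sum.inr b) :=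
    Walk.cons hax (Walk.cons hxb Walk.nil) with hp
  have hpath : p.IsPath := by
    simp [hp, Walk.isPath_def, hab.ne, h4, Ne.symm h3]
  have hlen : p.length = 2 := by simp [hp]
  have hreach : (compPrism T).Reachable (Sum.inr a) (Sum.inr b) := ⟨p⟩
  have hd0 : (compPrism T).dist (Sum.inr a) (Sum.inr b) ≠ 0 := by
    intro h
    have := hreach.dist_eq_zero_iff.mp h
    simp [hab.ne] at this
  have hd1 : (compPrism T).dist (Sum.inr a) (Sum.inr b) ≠ 1 :=
    fun h => hnab (SimpleGraph.dist_eq_one_iff_adj.mp h)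
  have hdle : (compPrism T).dist (Sum.inr a) (Sum.inr b) ≤ 2 :=
    hlen ▸ SimpleGraph.dist_le p
  have hdist : (compPrism T).dist (Sum.inr a) (Sum.inr b) = 2 := by omega
  exact hconv _ ha _ hb _ ⟨p, hpath, by rw [hdist, hlen], by simp [hp]⟩

lemma step_down {V : Type*} {T : SimpleGraph V} (hconn : T.Connected) {x z : V} {n : ℕ}
    (h : T.dist x z = n + 1) : ∃ y, T.Adj x y ∧ T.dist y z = n := by
  obtain ⟨p, hplen⟩ := (hconn.preconnected x z).exists_walk_length_eq_dist
  rw [h] at hplen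
  cases p with
  | nil => simp at hplen
  | cons hadj q =>
    rename_i y
    refine ⟨y, hadj, le_antisymm ?_ ?_⟩
    · have hq := SimpleGraph.dist_le q
      simp [Walk.length_cons] at hplen
      omega
    · have ht := hconn.dist_triangle (u := x) (v := y) (w := z)
      have hxy : T.dist x y ≤ 1 := by
        simpa using SimpleGraph.dist_le (Walk.cons hadj Walk.nil)
      omega

lemma chain3 {V : Type*} {T : SimpleGraph V} (hconn : T.Connected) {v z : V}
    (h : 3 ≤ T.dist v z) :
    ∃ p1 p2 p3 : V, T.Adj v p1 ∧ T.Adj p1 p2 ∧ T.Adj p2 p3 ∧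
      T.dist v p2 = 2 ∧ T.dist v p3 = 3 := by
  obtain ⟨m, hm⟩ : ∃ m, T.dist v z = m + 3 := ⟨T.dist v z - 3, by omega⟩
  obtain ⟨p1, h1, hd1⟩ := step_down hconn (show T.dist v z = (m + 2) + 1 by omega)
  obtain ⟨p2, h2, hd2⟩ := step_down hconn (show T.dist p1 z = (m + 1) + 1 by omega)
  obtain ⟨p3, h3, hd3⟩ := step_down hconn (show T.dist p2 z = m + 1 from hd2)
  refine ⟨p1, p2, p3, h1, h2, h3, ?_, ?_⟩
  · have hle : T.dist v p2 ≤ 2 := by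
      simpa using SimpleGraph.dist_le (Walk.cons h1 (Walk.cons h2 Walk.nil))
    have ht := hconn.dist_triangle (u := v) (v := p2) (w := z)
    omega
  · have hle : T.dist v p3 ≤ 3 := by
      simpa using SimpleGraph.dist_le (Walk.cons h1 (Walk.cons h2 (Walk.cons h3 Walk.nil)))
    have ht := hconn.dist_triangle (u := v) (v := p3) (w := z)
    omega

lemma exists_dist5 {V : Type*} [Fintype V] (T : SimpleGraph V) (x : V)
    (hd : graphDiam T = 5) : ∃ a b : V, T.dist a b = 5 := by
  classical
  have hne : {d | ∃ u v : V, T.dist u v = d}.Nonempty := ⟨T.dist x x, x, x, rfl⟩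
  have hbdd : BddAbove {d | ∃ u v : V, T.dist u v = d} := by
    refine ⟨Fintype.card V, ?_⟩
    rintro d ⟨a, b, rfl⟩
    by_cases h : T.Reachable a b
    · obtain ⟨p⟩ := h
      calc T.dist a b ≤ p.bypass.length := SimpleGraph.dist_le _
        _ ≤ Fintype.card V := le_of_lt p.bypass_isPath.length_lt
    · simp [SimpleGraph.dist_eq_zero_of_not_reachable h]
  have hmem := Nat.sSup_mem hne hbdd
  have hd' : sSup {d | ∃ u v : V, T.dist u v = d} = 5 := hd
  rw [hd'] at hmem
  exact hmem

lemma exists_far {V : Type*} [Fintype V] {T : SimpleGraph V} (hconn : T.Connected)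
    (hd : graphDiam T = 5) (x : V) : ∃ z, 3 ≤ T.dist x z := by
  obtain ⟨a, b, hab⟩ := exists_dist5 T x hd
  have ht := hconn.dist_triangle (u := a) (v := x) (w := b)
  have hc : T.dist a x = T.dist x a := SimpleGraph.dist_comm
  rcases le_or_gt 3 (T.dist x a) with h | h
  · exact ⟨a, h⟩
  · exact ⟨b, by omega⟩

theorem stmt5 {V : Type*} [Fintype V] (T : SimpleGraph V) (hT : T.IsTree)
    (hd : graphDiam T = 5) (u v w : V) (hvu : T.Adj v u) (hvw : T.Adj v w)
    (hne : u ≠ w) :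
    Set.range Sum.inr ⊆ geoHull (compPrism T) {Sum.inr u, Sum.inr v, Sum.inr w} := by
  have hconn := hT.isConnected
  have hAcyc := hT.IsAcyclic
  rintro _ ⟨x, rfl⟩
  refine Set.mem_sInter.mpr ?_
  rintro C ⟨hconv, hsub⟩
  have hu : Sum.inr u ∈ C := hsub (by simp)
  have hv : Sum.inr v ∈ C := hsub (by simp)
  have hw : Sum.inr w ∈ C := hsub (by simp)
  have hadj1 : ∀ {a b : V}, T.Adj a b → T.dist a b = 1 :=
    fun h => SimpleGraph.dist_eq_one_iff_adj.mpr h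
  -- Step D
  have stepD : ∀ y, ¬ T.Adj v y → Sum.inr y ∈ C := by
    intro y hyv
    by_cases hyveq : y = v
    · subst hyveq; exact hv
    by_cases hyu : T.Adj u y
    · have hyw : ¬ T.Adj w y := by
        intro hyw
        exact hyveq (midUnique hAcyc hne hvu.symm hvw hyu hyw.symm).symm
      refine key hconv hv hw hvw (fun h => hyv h.symm) (fun h => hyw h.symm) hyveq ?_
      exact fun h => hyv (h ▸ hvw)
    · refine key hconv hv hu hvu (fun h => hyv h.symm) (fun h => hyu h.symm) hyveq ?_
      exact fun h => hyv (h ▸ hvu)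
  -- geodesic chain from v
  obtain ⟨z, hz⟩ := exists_far hconn hd v
  obtain ⟨p1, p2, p3, hvp1, hp12, hp23, hd2, hd3⟩ := chain3 hconn hz
  have hp2C : Sum.inr p2 ∈ C := stepD p2 (fun h => by have := hadj1 h; omega)
  have hp3C : Sum.inr p3 ∈ C := stepD p3 (fun h => by have := hadj1 h; omega)
  -- Step F
  have stepF : ∀ y, T.Adj v y → y ≠ p1 → Sum.inr y ∈ C := by
    intro y hvy hyp1
    have hvne2 : v ≠ p2 := by
      intro e; rw [← e] at hd2; simp [SimpleGraph.dist_self] at hd2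
    have hyp2 : ¬ T.Adj y p2 := fun h => hyp1 (midUnique hAcyc hvne2 hvy h hvp1 hp12)
    have hyp3 : ¬ T.Adj y p3 := by
      intro h
      have h1 := hadj1 hvy
      have h2 := hadj1 h
      have ht := hconn.dist_triangle (u := v) (v := y) (w := p3)
      omega
    refine key hconv hp2C hp3C hp23 hyp2 hyp3 ?_ ?_
    · intro e; rw [e] at hvy; have := hadj1 hvy; omega
    · intro e; rw [e] at hvy; have := hadj1 hvy; omega
  by_cases hxv : T.Adj v x
  · by_cases hxp1 : x = p1
    · subst hxp1
      obtain ⟨z', hz'⟩ := exists_far hconn hd x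
      obtain ⟨q1, q2, q3, hxq1, hq12, hq23, he2, he3⟩ := chain3 hconn hz'
      have hq3C : Sum.inr q3 ∈ C := by
        apply stepD
        intro h
        have h1 := hadj1 h
        have h2 := hadj1 hxv
        have ht := hconn.dist_triangle (u := x) (v := v) (w := q3)
        have hc : T.dist x v = T.dist v x := SimpleGraph.dist_comm
        omega
      have hq2C : Sum.inr q2 ∈ C := by
        by_cases h : T.Adj v q2
        · refine stepF q2 h ?_
          intro e; rw [e] at he2; simp [SimpleGraph.dist_self] at he2
        · exact stepD q2 h
      refine key hconv hq2C hq3C hq23 ?_ ?_ ?_ ?_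
      · exact fun h => by have := hadj1 h; omega
      · exact fun h => by have := hadj1 h; omega
      · intro e; rw [← e] at he2; simp [SimpleGraph.dist_self] at he2
      · intro e; rw [← e] at he3; simp [SimpleGraph.dist_self] at he3
    · exact stepF x hxv hxp1
  · exact stepD x hxv
end

section
/- If T is a tree with diameter at least 5, then the convexity number of the complementary prism TT̄ equals max{n(T), 2Δ(T) + 1}, where n(T) is the number of vertices of T and Δ(T) its maximum degree. -/
open SimpleGraph

open Sum

namespace CPAux

open SimpleGraph

/-! ### Generic walk lemmas -/

variable {W : Type*} {G : SimpleGraph W}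

lemma walk_len0 {u v : W} (p : G.Walk u v) (h : p.length = 0) :
    u = v ∧ p.support = [u] := by
  cases p with
  | nil => exact ⟨rfl, rfl⟩
  | cons ha q => simp at h

lemma walk_len1 {u v : W} (p : G.Walk u v) (h : p.length = 1) :
    G.Adj u v ∧ p.support = [u, v] := by
  cases p with
  | nil => simp at h
  | cons ha q =>
    cases q with
    | nil => exact ⟨ha, rfl⟩
    | cons hb r => simp [SimpleGraph.Walk.length_cons] at h

lemma walk_len2 {u v : W} (p : G.Walk u v) (h : p.length = 2) :
    ∃ x, G.Adj u x ∧ G.Adj x v ∧ p.support = [u, x, v] := by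
  cases p with
  | nil => simp at h
  | cons ha q =>
    cases q with
    | nil => simp at h
    | cons hb r =>
      cases r with
      | nil => exact ⟨_, ha, hb, rfl⟩
      | cons hc s => simp [SimpleGraph.Walk.length_cons] at h

lemma walk_len3 {u v : W} (p : G.Walk u v) (h : p.length = 3) :
    ∃ x y, G.Adj u x ∧ G.Adj x y ∧ G.Adj y v ∧ p.support = [u, x, y, v] := by
  cases p with
  | nil => simp at h
  | cons ha q =>
    cases q with
    | nil => simp at h
    | cons hb r =>
      cases r with
      | nil => simp at h
      | cons hc s =>
        cases s with
        | nil => exact ⟨_, _, ha, hb, hc, rfl⟩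
        | cons hd t => simp [SimpleGraph.Walk.length_cons] at h

lemma dist_eq_two_of {u v : W} (hne : u ≠ v) (hna : ¬G.Adj u v)
    (p : G.Walk u v) (hp : p.length = 2) : G.dist u v = 2 := by
  have h2 : G.dist u v ≤ 2 := hp ▸ SimpleGraph.dist_le p
  have h0 : G.dist u v ≠ 0 :=
    SimpleGraph.dist_ne_zero_iff_ne_and_reachable.mpr ⟨hne, ⟨p⟩⟩
  have h1 : G.dist u v ≠ 1 := fun h => hna (SimpleGraph.dist_eq_one_iff_adj.mp h)
  omega

lemma dist_eq_three_of {u v : W} (hne : u ≠ v) (hna : ¬G.Adj u v)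
    (hno : ∀ x, ¬(G.Adj u x ∧ G.Adj x v))
    (p : G.Walk u v) (hp : p.length = 3) : G.dist u v = 3 := by
  have h3 : G.dist u v ≤ 3 := hp ▸ SimpleGraph.dist_le p
  have h0 : G.dist u v ≠ 0 :=
    SimpleGraph.dist_ne_zero_iff_ne_and_reachable.mpr ⟨hne, ⟨p⟩⟩
  have h1 : G.dist u v ≠ 1 := fun h => hna (SimpleGraph.dist_eq_one_iff_adj.mp h)
  have h2 : G.dist u v ≠ 2 := by
    intro h
    obtain ⟨q, hq⟩ := SimpleGraph.exists_walk_of_dist_ne_zero (G := G) (u := u) (v := v) (by omega)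
    rw [h] at hq
    obtain ⟨x, hx1, hx2, -⟩ := walk_len2 q hq
    exact hno x ⟨hx1, hx2⟩
  omega

/-- explicit 2-step walk -/
def w2 {u x v : W} (h1 : G.Adj u x) (h2 : G.Adj x v) : G.Walk u v :=
  SimpleGraph.Walk.cons h1 (SimpleGraph.Walk.cons h2 SimpleGraph.Walk.nil)

@[simp] lemma w2_length {u x v : W} (h1 : G.Adj u x) (h2 : G.Adj x v) :
    (w2 h1 h2).length = 2 := rfl

@[simp] lemma w2_support {u x v : W} (h1 : G.Adj u x) (h2 : G.Adj x v) :
    (w2 h1 h2).support = [u, x, v] := rfl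

lemma w2_isPath {u x v : W} (h1 : G.Adj u x) (h2 : G.Adj x v) (huv : u ≠ v) :
    (w2 h1 h2).IsPath := by
  rw [SimpleGraph.Walk.isPath_def, w2_support]
  simp [h1.ne, h2.ne, huv, h1.ne']

def w3 {u x y v : W} (h1 : G.Adj u x) (h2 : G.Adj x y) (h3 : G.Adj y v) : G.Walk u v :=
  SimpleGraph.Walk.cons h1 (SimpleGraph.Walk.cons h2 (SimpleGraph.Walk.cons h3 SimpleGraph.Walk.nil))

@[simp] lemma w3_length {u x y v : W} (h1 : G.Adj u x) (h2 : G.Adj x y) (h3 : G.Adj y v) :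
    (w3 h1 h2 h3).length = 3 := rfl

@[simp] lemma w3_support {u x y v : W} (h1 : G.Adj u x) (h2 : G.Adj x y) (h3 : G.Adj y v) :
    (w3 h1 h2 h3).support = [u, x, y, v] := rfl

lemma w3_isPath {u x y v : W} (h1 : G.Adj u x) (h2 : G.Adj x y) (h3 : G.Adj y v)
    (huy : u ≠ y) (huv : u ≠ v) (hxv : x ≠ v) : (w3 h1 h2 h3).IsPath := by
  rw [SimpleGraph.Walk.isPath_def, w3_support]
  simp [h1.ne, h2.ne, h3.ne, huy, huv, hxv, h1.ne', h2.ne', h3.ne']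

/-! ### interval classification -/

lemma interval_len0 {u v w : W} (h : G.dist u v = 0) (hi : inInterval G u v w) : w = u := by
  obtain ⟨p, -, hl, hw⟩ := hi
  rw [h] at hl
  obtain ⟨-, hs⟩ := walk_len0 p hl
  rw [hs] at hw; simpa using hw

lemma interval_len1 {u v w : W} (h : G.dist u v = 1) (hi : inInterval G u v w) :
    w = u ∨ w = v := by
  obtain ⟨p, -, hl, hw⟩ := hi
  rw [h] at hl
  obtain ⟨-, hs⟩ := walk_len1 p hl
  rw [hs] at hw; simpa using hw

lemma interval_len2 {u v w : W} (h : G.dist u v = 2) (hi : inInterval G u v w) :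
    w = u ∨ w = v ∨ ∃ x, G.Adj u x ∧ G.Adj x v ∧ w = x := by
  obtain ⟨p, -, hl, hw⟩ := hi
  rw [h] at hl
  obtain ⟨x, hx1, hx2, hs⟩ := walk_len2 p hl
  rw [hs] at hw
  simp at hw
  rcases hw with h | h | h
  · exact Or.inl h
  · exact Or.inr (Or.inr ⟨x, hx1, hx2, h⟩)
  · exact Or.inr (Or.inl h)

/-! ### tree lemmas -/

variable {V : Type*} {T : SimpleGraph V}

lemma tree_path_eq (hT : T.IsTree) {u v : V} (p q : T.Walk u v)
    (hp : p.IsPath) (hq : q.IsPath) : p = q :=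
  congrArg Subtype.val (hT.IsAcyclic.path_unique ⟨p, hp⟩ ⟨q, hq⟩)

lemma tree_common_nbr_unique (hT : T.IsTree) {a b w w' : V} (hab : a ≠ b)
    (h1 : T.Adj a w) (h2 : T.Adj w b) (h3 : T.Adj a w') (h4 : T.Adj w' b) : w = w' := by
  have hp : (w2 h1 h2).IsPath := w2_isPath h1 h2 hab
  have hq : (w2 h3 h4).IsPath := w2_isPath h3 h4 hab
  have := tree_path_eq hT _ _ hp hq
  have hs := congrArg SimpleGraph.Walk.support this
  simp [SimpleGraph.Walk.support] at hs
  exact hs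

lemma tree_no_triangle (hT : T.IsTree) {a b c : V}
    (h1 : T.Adj a b) (h2 : T.Adj b c) (h3 : T.Adj a c) : False := by
  have hp : (w2 h1 h2).IsPath := w2_isPath h1 h2 h3.ne
  have hq : (SimpleGraph.Walk.cons h3 SimpleGraph.Walk.nil : T.Walk a c).IsPath := by
    rw [SimpleGraph.Walk.isPath_def]
    simp [SimpleGraph.Walk.support, h3.ne]
  have := tree_path_eq hT _ _ hp hq
  have hl := congrArg SimpleGraph.Walk.length this
  simp [w2] at hl

/-! ### compPrism adjacency -/

lemma cp_adj_ll {a b : V} : (compPrism T).Adj (inl a) (inl b) ↔ T.Adj a b := Iff.rfl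
lemma cp_adj_rr {a b : V} : (compPrism T).Adj (inr a) (inr b) ↔ a ≠ b ∧ ¬T.Adj a b := by
  show Tᶜ.Adj a b ↔ _
  exact compl_adj T a b
lemma cp_adj_lr {a b : V} : (compPrism T).Adj (inl a) (inr b) ↔ a = b := Iff.rfl
lemma cp_adj_rl {a b : V} : (compPrism T).Adj (inr a) (inl b) ↔ a = b := Iff.rfl

lemma cp_connected (hc : T.Connected) : (compPrism T).Connected := by
  have hne : Nonempty V := hc.nonempty
  let hom : T →g compPrism T := ⟨inl, fun h => h⟩
  have hll : ∀ u v : V, (compPrism T).Reachable (inl u) (inl v) := by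
    intro u v
    exact (hc.preconnected u v).map hom
  have hlr : ∀ u : V, (compPrism T).Reachable (inl u) (inr u) := by
    intro u
    exact SimpleGraph.Adj.reachable (by exact rfl : (compPrism T).Adj (inl u) (inr u))
  constructor
  rintro (u | u) (v | v)
  · exact hll u v
  · exact (hll u v).trans (hlr v)
  · exact ((hll v u).trans (hlr u)).symm
  · exact ((hlr u).symm.trans (hll u v)).trans (hlr v)

end CPAux

namespace CPAux
open SimpleGraph Sum

variable {V : Type*} {T : SimpleGraph V} {S : Set (V ⊕ V)}

section extraction
variable (hS : IsGeoConvex (compPrism T) S)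
include hS

/-- C1 : common neighbour of two nonadjacent `A`-vertices is in `A`. -/
lemma convex_C1 {a b m : V} (ha : inl a ∈ S) (hb : inl b ∈ S) (hab : a ≠ b)
    (hnadj : ¬T.Adj a b) (h1 : T.Adj a m) (h2 : T.Adj m b) : inl m ∈ S := by
  have ha1 : (compPrism T).Adj (inl a) (inl m) := h1
  have ha2 : (compPrism T).Adj (inl m) (inl b) := h2
  have hne : (inl a : V ⊕ V) ≠ inl b := fun h => hab (inl_injective h)
  have hna : ¬(compPrism T).Adj (inl a) (inl b) := hnadj
  have hdist : (compPrism T).dist (inl a) (inl b) = 2 :=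
    dist_eq_two_of hne hna (w2 ha1 ha2) (w2_length ha1 ha2)
  exact hS _ ha _ hb (inl m)
    ⟨w2 ha1 ha2, w2_isPath ha1 ha2 hne, by rw [hdist]; exact w2_length ha1 ha2, by simp⟩

/-- C3 : two `A`-vertices at distance ≥ 3 have their mirror copies in `B`. -/
lemma convex_C3 {a b : V} (ha : inl a ∈ S) (hb : inl b ∈ S) (hab : a ≠ b)
    (hnadj : ¬T.Adj a b) (hno : ∀ m, ¬(T.Adj a m ∧ T.Adj m b)) :
    inr a ∈ S ∧ inr b ∈ S := by
  have ha1 : (compPrism T).Adj (inl a) (inr a) := rfl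
  have ha2 : (compPrism T).Adj (inr a) (inr b) := cp_adj_rr.mpr ⟨hab, hnadj⟩
  have ha3 : (compPrism T).Adj (inr b) (inl b) := rfl
  have hne : (inl a : V ⊕ V) ≠ inl b := fun h => hab (inl_injective h)
  have hna : ¬(compPrism T).Adj (inl a) (inl b) := hnadj
  have hno' : ∀ x, ¬((compPrism T).Adj (inl a) x ∧ (compPrism T).Adj x (inl b)) := by
    rintro (m | m) ⟨hx1, hx2⟩
    · exact hno m ⟨hx1, hx2⟩
    · exact hab ((cp_adj_lr.mp hx1).trans (cp_adj_rl.mp hx2))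
  have hdist : (compPrism T).dist (inl a) (inl b) = 3 :=
    dist_eq_three_of hne hna hno' (w3 ha1 ha2 ha3) (w3_length ha1 ha2 ha3)
  have hpath : (w3 ha1 ha2 ha3).IsPath :=
    w3_isPath ha1 ha2 ha3 (by simp) hne (by simp)
  constructor
  · exact hS _ ha _ hb (inr a)
      ⟨w3 ha1 ha2 ha3, hpath, by rw [hdist]; exact w3_length ha1 ha2 ha3, by simp⟩
  · exact hS _ ha _ hb (inr b)
      ⟨w3 ha1 ha2 ha3, hpath, by rw [hdist]; exact w3_length ha1 ha2 ha3, by simp⟩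

/-- C4 : a `B`-vertex adjacent to an `A`-vertex is in `A`. -/
lemma convex_C4 {a b : V} (ha : inl a ∈ S) (hb : inr b ∈ S) (hadj : T.Adj a b) :
    inl b ∈ S := by
  have ha1 : (compPrism T).Adj (inl a) (inl b) := hadj
  have ha2 : (compPrism T).Adj (inl b) (inr b) := rfl
  have hne : (inl a : V ⊕ V) ≠ inr b := by simp
  have hna : ¬(compPrism T).Adj (inl a) (inr b) := fun h => hadj.ne (cp_adj_lr.mp h)
  have hdist : (compPrism T).dist (inl a) (inr b) = 2 :=
    dist_eq_two_of hne hna (w2 ha1 ha2) (w2_length ha1 ha2)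
  exact hS _ ha _ hb (inl b)
    ⟨w2 ha1 ha2, w2_isPath ha1 ha2 hne, by rw [hdist]; exact w2_length ha1 ha2, by simp⟩

/-- C5 : an `A`-vertex not adjacent to some `B`-vertex is in `B`. -/
lemma convex_C5 {a b : V} (ha : inl a ∈ S) (hb : inr b ∈ S) (hab : a ≠ b)
    (hnadj : ¬T.Adj a b) : inr a ∈ S := by
  have ha1 : (compPrism T).Adj (inl a) (inr a) := rfl
  have ha2 : (compPrism T).Adj (inr a) (inr b) := cp_adj_rr.mpr ⟨hab, hnadj⟩
  have hne : (inl a : V ⊕ V) ≠ inr b := by simp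
  have hna : ¬(compPrism T).Adj (inl a) (inr b) := fun h => hab (cp_adj_lr.mp h)
  have hdist : (compPrism T).dist (inl a) (inr b) = 2 :=
    dist_eq_two_of hne hna (w2 ha1 ha2) (w2_length ha1 ha2)
  exact hS _ ha _ hb (inr a)
    ⟨w2 ha1 ha2, w2_isPath ha1 ha2 hne, by rw [hdist]; exact w2_length ha1 ha2, by simp⟩

/-- C6 : common non-neighbours of an adjacent pair in `B` are in `B`. -/
lemma convex_C6 {a b z : V} (ha : inr a ∈ S) (hb : inr b ∈ S) (hadj : T.Adj a b)
    (hz1 : z ≠ a) (hz2 : z ≠ b) (hz3 : ¬T.Adj z a) (hz4 : ¬T.Adj z b) : inr z ∈ S := by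
  have ha1 : (compPrism T).Adj (inr a) (inr z) :=
    cp_adj_rr.mpr ⟨fun h => hz1 h.symm, fun h => hz3 h.symm⟩
  have ha2 : (compPrism T).Adj (inr z) (inr b) := cp_adj_rr.mpr ⟨hz2, hz4⟩
  have hne : (inr a : V ⊕ V) ≠ inr b := fun h => hadj.ne (inr_injective h)
  have hna : ¬(compPrism T).Adj (inr a) (inr b) := fun h => (cp_adj_rr.mp h).2 hadj
  have hdist : (compPrism T).dist (inr a) (inr b) = 2 :=
    dist_eq_two_of hne hna (w2 ha1 ha2) (w2_length ha1 ha2)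
  exact hS _ ha _ hb (inr z)
    ⟨w2 ha1 ha2, w2_isPath ha1 ha2 hne, by rw [hdist]; exact w2_length ha1 ha2, by simp⟩

end extraction
end CPAux

namespace CPAux
open SimpleGraph Sum

variable {V : Type*} [Fintype V] {T : SimpleGraph V}

lemma exists_nbr (hc : T.Connected) {p q : V} (hpq : p ≠ q) (v : V) : ∃ u, T.Adj v u := by
  classical
  have ht : ∃ t : V, t ≠ v := by
    by_cases h : p = v
    · exact ⟨q, fun hq => hpq (h.trans hq.symm)⟩
    · exact ⟨p, h⟩
  obtain ⟨t, htv⟩ := ht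
  obtain ⟨w⟩ := hc.preconnected v t
  cases w with
  | nil => exact absurd rfl htv.symm
  | cons h q => exact ⟨_, h⟩

lemma main_upper (hT : T.IsTree) {u1 u2 : V} (hu : 5 ≤ T.dist u1 u2)
    (S : Set (V ⊕ V)) (hS : IsGeoConvex (compPrism T) S)
    (hn : Fintype.card V + 1 ≤ S.ncard) (hΔ : 2 * maxDeg T + 2 ≤ S.ncard) :
    S = Set.univ := by
  classical
  have hconn : T.Connected := hT.isConnected
  have hu12 : u1 ≠ u2 := by
    intro h; rw [h, SimpleGraph.dist_self] at hu; omega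
  have hadj_ex : ∀ v : V, ∃ u, T.Adj v u := exists_nbr hconn hu12
  set A : Set V := {v | inl v ∈ S} with hA_def
  set B : Set V := {v | inr v ∈ S} with hB_def
  have hS_eq : S = (inl '' A) ∪ (inr '' B) := by
    ext x
    cases x with
    | inl v => simp [hA_def]
    | inr v => simp [hB_def]
  have hcard : S.ncard = A.ncard + B.ncard := by
    rw [hS_eq, Set.ncard_union_eq (by
      rw [Set.disjoint_left]; rintro _ ⟨v, -, rfl⟩ ⟨w, -, h⟩; exact Sum.inl_ne_inr h.symm)
      (Set.toFinite _) (Set.toFinite _),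
      Set.ncard_image_of_injective _ Sum.inl_injective,
      Set.ncard_image_of_injective _ Sum.inr_injective]
  have hdeg_le : ∀ v : V, vdeg T v ≤ maxDeg T := by
    intro v
    apply le_csSup
    · refine ⟨Fintype.card V, ?_⟩
      rintro d ⟨w, rfl⟩
      calc vdeg T w ≤ (Set.univ : Set V).ncard :=
            Set.ncard_le_ncard (Set.subset_univ _) (Set.toFinite _)
        _ = Fintype.card V := by rw [Set.ncard_univ, Nat.card_eq_fintype_card]
    · exact ⟨v, rfl⟩
  have hABne : (A ∩ B).Nonempty := by
    apply Set.nonempty_of_ncard_ne_zero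
    have h1 := Set.ncard_union_add_ncard_inter A B (Set.toFinite _) (Set.toFinite _)
    have h2 : (A ∪ B).ncard ≤ Fintype.card V := by
      calc (A ∪ B).ncard ≤ (Set.univ : Set V).ncard :=
            Set.ncard_le_ncard (Set.subset_univ _) (Set.toFinite _)
        _ = Fintype.card V := by rw [Set.ncard_univ, Nat.card_eq_fintype_card]
    have h3 := hcard ▸ hn
    omega
  -- Step 1 : A ⊆ B
  have hAsubB : A ⊆ B := by
    by_contra hc
    rw [Set.not_subset] at hc
    obtain ⟨c, hcA, hcB⟩ := hc
    have hB_adj : ∀ b ∈ B, T.Adj c b := by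
      intro b hb
      by_contra hnadj
      have hcb : c ≠ b := fun h => hcB (h ▸ hb)
      exact hcB (convex_C5 hS hcA hb hcb hnadj)
    have hBcard : B.ncard ≤ maxDeg T := by
      refine le_trans (Set.ncard_le_ncard (fun b hb => hB_adj b hb) (Set.toFinite _)) (hdeg_le c)
    have hAcard : maxDeg T + 2 ≤ A.ncard := by
      have h3 := hcard ▸ hΔ; omega
    have hex : ∃ a ∈ A, a ≠ c ∧ ¬T.Adj c a := by
      by_contra hno
      push_neg at hno
      have hsub : A ⊆ insert c (T.neighborSet c) := by
        intro a ha
        rcases eq_or_ne a c with h | h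
        · exact h ▸ Set.mem_insert _ _
        · exact Set.mem_insert_of_mem _ (hno a ha h)
      have hle : A.ncard ≤ maxDeg T + 1 := by
        calc A.ncard ≤ (insert c (T.neighborSet c)).ncard :=
              Set.ncard_le_ncard hsub (Set.toFinite _)
          _ ≤ (T.neighborSet c).ncard + 1 := Set.ncard_insert_le _ _
          _ ≤ maxDeg T + 1 := by have := hdeg_le c; unfold vdeg at this; omega
      omega
    obtain ⟨a, haA, hac, hnca⟩ := hex
    have haB : a ∉ B := fun h => hnca (hB_adj a h)
    by_cases hm : ∃ m, T.Adj c m ∧ T.Adj m a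
    · obtain ⟨m, hm1, hm2⟩ := hm
      have hmA : m ∈ A := convex_C1 hS hcA haA (fun h => hac h.symm) (fun h => hnca h) hm1 hm2
      have haadj : ∀ b ∈ B, T.Adj a b := by
        intro b hb
        by_contra hnadj
        have hab : a ≠ b := fun h => haB (h ▸ hb)
        exact haB (convex_C5 hS haA hb hab hnadj)
      have hBm : ∀ b ∈ B, b = m := by
        intro b hb
        exact tree_common_nbr_unique hT (fun h => hac h.symm) (hB_adj b hb) ((haadj b hb).symm)
          hm1 hm2 |>.symm ▸ rfl
      obtain ⟨z, hzA, hzB⟩ := hABne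
      have hzm : z = m := hBm z hzB
      have hmB : m ∈ B := hzm ▸ hzB
      have hAsub : A ⊆ insert m (T.neighborSet m) := by
        intro a' ha'
        rcases eq_or_ne a' m with h | h
        · exact h ▸ Set.mem_insert _ _
        · by_cases hadj : T.Adj m a'
          · exact Set.mem_insert_of_mem _ hadj
          · have ha'B : a' ∈ B := convex_C5 hS ha' hmB h (fun hh => hadj hh.symm)
            exact absurd (hBm a' ha'B) h
      have hle : A.ncard ≤ maxDeg T + 1 := by
        calc A.ncard ≤ (insert m (T.neighborSet m)).ncard :=
              Set.ncard_le_ncard hAsub (Set.toFinite _)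
          _ ≤ (T.neighborSet m).ncard + 1 := Set.ncard_insert_le _ _
          _ ≤ maxDeg T + 1 := by have := hdeg_le m; unfold vdeg at this; omega
      omega
    · push_neg at hm
      have h3 := convex_C3 hS hcA haA (fun h => hac h.symm) hnca (fun m hmm => hm m hmm.1 hmm.2)
      exact hcB h3.1
  -- the complement of B
  set Wc : Set V := Bᶜ with hW_def
  by_cases hWe : Wc = ∅
  · -- B = univ, and then S = univ
    have hBuniv : B = Set.univ := by
      rw [← Set.compl_empty_iff, ← hW_def]; exact hWe
    have hAne : A.Nonempty := hABne.mono Set.inter_subset_left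
    obtain ⟨a0, ha0⟩ := hAne
    have hAuniv : ∀ v, v ∈ A := by
      have key : ∀ (x y : V), x ∈ A → T.Walk x y → y ∈ A := by
        intro x y hx p
        induction p with
        | nil => exact hx
        | @cons u' v' w' h q ih =>
          refine ih ?_
          have hv' : v' ∈ B := by rw [hBuniv]; trivial
          exact convex_C4 hS hx hv' h
      intro v
      obtain ⟨p⟩ := hconn.preconnected a0 v
      exact key a0 v ha0 p
    ext s
    simp only [Set.mem_univ, iff_true]
    cases s with
    | inl v => exact hAuniv v
    | inr v =>
      have hv : v ∈ B := by rw [hBuniv]; trivial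
      exact hv
  · exfalso
    obtain ⟨w0, hw0⟩ := Set.nonempty_iff_ne_empty.mpr hWe
    have hWA : Wc.ncard + 1 ≤ A.ncard := by
      have h1 : B.ncard + Wc.ncard = Fintype.card V := by
        rw [hW_def, Set.ncard_add_ncard_compl _ (Set.toFinite _) (Set.toFinite _),
          Nat.card_eq_fintype_card]
      have h3 := hcard ▸ hn
      omega
    have hWnotB : ∀ w ∈ Wc, w ∉ B := fun w hw => hw
    have hWneB : ∀ w ∈ Wc, ∀ b ∈ B, w ≠ b := fun w hw b hb h => hWnotB w hw (h ▸ hb)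
    have hBofW : ∀ s : V, s ∉ Wc → s ∈ B := by
      intro s hs
      rwa [hW_def, Set.notMem_compl_iff] at hs
    have Ra : ∀ a ∈ A, ∀ b ∈ B, T.Adj a b → b ∈ A := by
      intro a ha b hb hab
      exact convex_C4 hS ha hb hab
    have Rb : ∀ w, ∀ a1 ∈ A, ∀ a2 ∈ A, a1 ≠ a2 → T.Adj w a1 → T.Adj w a2 → w ∈ A := by
      intro w a1 ha1 a2 ha2 hne h1 h2
      have hnadj : ¬T.Adj a1 a2 := fun h => tree_no_triangle hT h1 h h2
      exact convex_C1 hS ha1 ha2 hne hnadj h1.symm h2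
    have Rd : ∀ b1 ∈ B, ∀ b2 ∈ B, T.Adj b1 b2 → ∀ w ∈ Wc, T.Adj w b1 ∨ T.Adj w b2 := by
      intro b1 hb1 b2 hb2 hadj w hw
      by_contra hcon
      push_neg at hcon
      exact hWnotB w hw
        (convex_C6 hS hb1 hb2 hadj (hWneB w hw b1 hb1) (hWneB w hw b2 hb2) hcon.1 hcon.2)
    -- an edge inside A
    obtain ⟨x, hxA, l, hlA, hxl⟩ : ∃ x ∈ A, ∃ l ∈ A, T.Adj x l := by
      by_contra hno
      push_neg at hno
      choose f hf using hadj_ex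
      have hmaps : ∀ a ∈ A, f a ∈ Wc := by
        intro a ha
        by_contra hfW
        have hfB : f a ∈ B := hBofW _ hfW
        exact hno a ha (f a) (Ra a ha (f a) hfB (hf a)) (hf a)
      have hinj : Set.InjOn f A := by
        intro a1 h1 a2 h2 heq
        by_contra hne
        have hwA : f a1 ∈ A := by
          refine Rb (f a1) a1 h1 a2 h2 hne (hf a1).symm ?_
          rw [heq]; exact (hf a2).symm
        exact hWnotB _ (hmaps a1 h1) (hAsubB hwA)
      have hle := Set.ncard_le_ncard_of_injOn f hmaps hinj (Set.toFinite _)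
      omega
    have hxB : x ∈ B := hAsubB hxA
    have hlB : l ∈ B := hAsubB hlA
    have e2 : ∀ w ∈ Wc, T.Adj w x ∨ T.Adj w l := fun w hw => Rd x hxB l hlB hxl w hw
    have hnoboth : ∀ w, T.Adj w x → T.Adj w l → False := fun w h1 h2 =>
      tree_no_triangle hT h1 hxl h2
    by_cases hW1 : ∀ w ∈ Wc, w = w0
    · -- |W| = 1 : everything is within distance 2 of w0
      have hball : ∀ v : V, T.dist v w0 ≤ 2 := by
        intro v
        by_cases hvB : v ∈ B
        · by_cases hedge : ∃ b' ∈ B, T.Adj v b'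
          · obtain ⟨b', hb'B, hvb'⟩ := hedge
            rcases Rd v hvB b' hb'B hvb' w0 hw0 with h | h
            · exact le_trans (SimpleGraph.dist_le (Walk.cons h.symm Walk.nil)) (by norm_num)
            · exact le_trans (SimpleGraph.dist_le (w2 hvb' h.symm)) (by norm_num)
          · push_neg at hedge
            obtain ⟨s, hs⟩ := hadj_ex v
            have hsW : s ∈ Wc := by
              by_contra hsW
              exact hedge s (hBofW s hsW) hs
            have hsw0 : s = w0 := hW1 s hsW
            exact le_trans (SimpleGraph.dist_le (Walk.cons (hsw0 ▸ hs) Walk.nil)) (by norm_num)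
        · have hvW : v ∈ Wc := by rw [hW_def]; exact hvB
          have hvw0 : v = w0 := hW1 v hvW
          rw [hvw0, SimpleGraph.dist_self]; omega
      have hle4 : T.dist u1 u2 ≤ 4 := by
        calc T.dist u1 u2 ≤ T.dist u1 w0 + T.dist w0 u2 := hconn.dist_triangle
          _ ≤ 2 + 2 := add_le_add (hball u1)
              (by rw [SimpleGraph.dist_comm]; exact hball u2)
      omega
    · push_neg at hW1
      obtain ⟨wb, hwbW, hwb0⟩ := hW1
      -- find a centre c ∈ A adjacent to all of Wc
      have hctr : ∃ c ∈ A, ∀ w ∈ Wc, T.Adj w c := by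
        by_cases hcx : ∀ w ∈ Wc, T.Adj w x
        · exact ⟨x, hxA, hcx⟩
        by_cases hcl : ∀ w ∈ Wc, T.Adj w l
        · exact ⟨l, hlA, hcl⟩
        exfalso
        push_neg at hcx hcl
        obtain ⟨wa', hwa'W, hwa'x⟩ := hcx
        obtain ⟨wb', hwb'W, hwb'l⟩ := hcl
        have hwa'l : T.Adj wa' l := (e2 wa' hwa'W).resolve_left hwa'x
        have hwb'x : T.Adj wb' x := (e2 wb' hwb'W).resolve_right hwb'l
        have hw12 : wa' ≠ wb' := fun h => hwa'x (h ▸ hwb'x)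
        -- reference path wa' - l - x - wb'
        have hP : (w3 hwa'l hxl.symm hwb'x.symm).IsPath :=
          w3_isPath _ _ _ (hWneB wa' hwa'W x hxB) hw12 (fun h => hWneB wb' hwb'W l hlB h.symm)
        have hedge_eq : ∀ b1 ∈ B, ∀ b2 ∈ B, T.Adj b1 b2 →
            (b1 = l ∧ b2 = x) ∨ (b1 = x ∧ b2 = l) := by
          intro b1 hb1 b2 hb2 hadj
          have h1 := Rd b1 hb1 b2 hb2 hadj wa' hwa'W
          have h2 := Rd b1 hb1 b2 hb2 hadj wb' hwb'W
          rcases h1 with ha1 | ha1 <;> rcases h2 with hb1' | hb1'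
          · -- both adjacent to b1 : contradiction
            exfalso
            have hq : (w2 ha1 hb1'.symm).IsPath := w2_isPath _ _ hw12
            have heq := tree_path_eq hT _ _ hq hP
            have hlen := congrArg SimpleGraph.Walk.length heq
            simp [w2, w3] at hlen
          · -- wa' ~ b1, wb' ~ b2
            have hq : (w3 ha1 hadj hb1'.symm).IsPath :=
              w3_isPath _ _ _ (hWneB wa' hwa'W b2 hb2) hw12 (fun h => hWneB wb' hwb'W b1 hb1 h.symm)
            have heq := tree_path_eq hT _ _ hq hP
            have hsup := congrArg SimpleGraph.Walk.support heq
            simp [w3] at hsup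
            exact Or.inl ⟨hsup.1, hsup.2⟩
          · -- wa' ~ b2, wb' ~ b1
            have hq : (w3 ha1 hadj.symm hb1'.symm).IsPath :=
              w3_isPath _ _ _ (hWneB wa' hwa'W b1 hb1) hw12 (fun h => hWneB wb' hwb'W b2 hb2 h.symm)
            have heq := tree_path_eq hT _ _ hq hP
            have hsup := congrArg SimpleGraph.Walk.support heq
            simp [w3] at hsup
            exact Or.inr ⟨hsup.2, hsup.1⟩
          · exfalso
            have hq : (w2 ha1 hb1'.symm).IsPath := w2_isPath _ _ hw12
            have heq := tree_path_eq hT _ _ hq hP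
            have hlen := congrArg SimpleGraph.Walk.length heq
            simp [w2, w3] at hlen
        -- A is contained in {x, l}
        have hAsub2 : ∀ a ∈ A, a = x ∨ a = l := by
          intro a ha
          by_contra hcon
          push_neg at hcon
          obtain ⟨hax, hal⟩ := hcon
          obtain ⟨s, hs⟩ := hadj_ex a
          by_cases hsB : s ∈ B
          · rcases hedge_eq a (hAsubB ha) s hsB hs with ⟨h1, -⟩ | ⟨h1, -⟩
            · exact hal h1
            · exact hax h1
          · have hsW : s ∈ Wc := by rw [hW_def]; exact hsB
            rcases e2 s hsW with h | h
            · exact hWnotB s hsW (hAsubB (Rb s a ha x hxA hax hs.symm h))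
            · exact hWnotB s hsW (hAsubB (Rb s a ha l hlA hal hs.symm h))
        have hW2 : 2 ≤ Wc.ncard := by
          have hsub : ({wa', wb'} : Set V) ⊆ Wc := by
            intro t ht
            rcases ht with h | h
            · exact h ▸ hwa'W
            · exact h ▸ hwb'W
          calc 2 = ({wa', wb'} : Set V).ncard := (Set.ncard_pair hw12).symm
            _ ≤ Wc.ncard := Set.ncard_le_ncard hsub (Set.toFinite _)
        have hA2 : A.ncard ≤ 2 := by
          have hsub : A ⊆ ({x, l} : Set V) := by
            intro a ha
            rcases hAsub2 a ha with h | h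
            · exact Or.inl h
            · exact Or.inr h
          calc A.ncard ≤ ({x, l} : Set V).ncard := Set.ncard_le_ncard hsub (Set.toFinite _)
            _ = 2 := Set.ncard_pair hxl.ne
        omega
      obtain ⟨c, hcA, hc_adj⟩ := hctr
      have hcB : c ∈ B := hAsubB hcA
      have hw0c : T.Adj w0 c := hc_adj w0 hw0
      have hwbc : T.Adj wb c := hc_adj wb hwbW
      -- every vertex is within distance 2 of c
      have hball : ∀ v : V, T.dist v c ≤ 2 := by
        intro v
        by_cases hvB : v ∈ B
        · by_cases hvc : v = c
          · rw [hvc, SimpleGraph.dist_self]; omega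
          by_cases hedge : ∃ b' ∈ B, T.Adj v b'
          · obtain ⟨b', hb'B, hvb'⟩ := hedge
            by_cases hb'c : b' = c
            · exact le_trans (SimpleGraph.dist_le (Walk.cons (hb'c ▸ hvb') Walk.nil)) (by norm_num)
            rcases Rd v hvB b' hb'B hvb' w0 hw0 with h | h
            · exact le_trans (SimpleGraph.dist_le (w2 h.symm hw0c)) (by norm_num)
            rcases Rd v hvB b' hb'B hvb' wb hwbW with h' | h'
            · exact le_trans (SimpleGraph.dist_le (w2 h'.symm hwbc)) (by norm_num)
            · exact absurd (tree_common_nbr_unique hT hb'c h.symm hw0c h'.symm hwbc) hwb0.symm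
          · push_neg at hedge
            obtain ⟨s, hs⟩ := hadj_ex v
            have hsW : s ∈ Wc := by
              by_contra hsW
              exact hedge s (hBofW s hsW) hs
            exact le_trans (SimpleGraph.dist_le (w2 hs (hc_adj s hsW))) (by norm_num)
        · have hvW : v ∈ Wc := by rw [hW_def]; exact hvB
          exact le_trans (SimpleGraph.dist_le (Walk.cons (hc_adj v hvW) Walk.nil)) (by norm_num)
      have hle4 : T.dist u1 u2 ≤ 4 := by
        calc T.dist u1 u2 ≤ T.dist u1 c + T.dist c u2 := hconn.dist_triangle
          _ ≤ 2 + 2 := add_le_add (hball u1)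
              (by rw [SimpleGraph.dist_comm]; exact hball u2)
      omega


end CPAux

namespace CPAux
open SimpleGraph Sum

variable {V : Type*} [Fintype V] {T : SimpleGraph V}

lemma diam_pair (hd : 5 ≤ graphDiam T) : ∃ u v : V, 5 ≤ T.dist u v := by
  classical
  have hbdd : BddAbove {d | ∃ u v : V, T.dist u v = d} := by
    refine ⟨Fintype.card V, ?_⟩
    rintro d ⟨u, v, rfl⟩
    by_cases h : T.Reachable u v
    · obtain ⟨p, hp, hl⟩ := h.exists_path_of_dist
      rw [← hl]; exact le_of_lt hp.length_lt
    · rw [SimpleGraph.dist_eq_zero_of_not_reachable h]; omega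
  rcases Set.eq_empty_or_nonempty {d | ∃ u v : V, T.dist u v = d} with h | h
  · exfalso
    have : graphDiam T = 0 := by
      unfold graphDiam; rw [h]; exact csSup_empty
    omega
  · have hmem := Nat.sSup_mem h hbdd
    obtain ⟨u, v, huv⟩ := hmem
    refine ⟨u, v, ?_⟩
    unfold graphDiam at hd
    omega

lemma common_nonnbr (hconn : T.Connected) (hpair : ∃ u v : V, 5 ≤ T.dist u v)
    {a b : V} (hab : T.Adj a b) :
    ∃ z, z ≠ a ∧ z ≠ b ∧ ¬T.Adj z a ∧ ¬T.Adj z b := by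
  classical
  obtain ⟨u1, u2, hu⟩ := hpair
  by_contra hno
  push_neg at hno
  have hball : ∀ z : V, T.dist z a ≤ 2 := by
    intro z
    by_cases h1 : z = a
    · rw [h1, SimpleGraph.dist_self]; omega
    by_cases h2 : z = b
    · rw [h2]
      exact le_trans (SimpleGraph.dist_le (Walk.cons hab.symm Walk.nil)) (by norm_num)
    by_cases h3 : T.Adj z a
    · exact le_trans (SimpleGraph.dist_le (Walk.cons h3 Walk.nil)) (by norm_num)
    · have h4 := hno z h1 h2 h3
      exact le_trans (SimpleGraph.dist_le (w2 h4 hab.symm)) (by norm_num)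
  have hle : T.dist u1 u2 ≤ 4 := by
    calc T.dist u1 u2 ≤ T.dist u1 a + T.dist a u2 := hconn.dist_triangle
      _ ≤ 2 + 2 := add_le_add (hball u1) (by rw [SimpleGraph.dist_comm]; exact hball u2)
  omega

end CPAux

namespace CPAux
open SimpleGraph Sum

variable {V : Type*} [Fintype V] {T : SimpleGraph V}

lemma witness1 (hconn : T.Connected) (hpair : ∃ u v : V, 5 ≤ T.dist u v) :
    IsGeoConvex (compPrism T) (Set.range (inr : V → V ⊕ V)) ∧
      (Set.range (inr : V → V ⊕ V)) ≠ Set.univ ∧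
      (Set.range (inr : V → V ⊕ V)).ncard = Nat.card V := by
  classical
  obtain ⟨u1, u2, hu⟩ := hpair
  refine ⟨?_, ?_, ?_⟩
  · intro u hu' v hv' w hi
    obtain ⟨a, rfl⟩ := hu'
    obtain ⟨b, rfl⟩ := hv'
    rcases eq_or_ne a b with rfl | hab
    · have h0 : (compPrism T).dist (inr a) (inr a) = 0 := SimpleGraph.dist_self
      have := interval_len0 h0 hi
      rw [this]; exact ⟨a, rfl⟩
    by_cases hadj : T.Adj a b
    · -- distance 2 via a common non-neighbour
      obtain ⟨z, hz1, hz2, hz3, hz4⟩ := common_nonnbr hconn ⟨u1, u2, hu⟩ hadj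
      have ha1 : (compPrism T).Adj (inr a) (inr z) :=
        cp_adj_rr.mpr ⟨fun h => hz1 h.symm, fun h => hz3 h.symm⟩
      have ha2 : (compPrism T).Adj (inr z) (inr b) := cp_adj_rr.mpr ⟨hz2, hz4⟩
      have hne : (inr a : V ⊕ V) ≠ inr b := fun h => hab (inr_injective h)
      have hna : ¬(compPrism T).Adj (inr a) (inr b) := fun h => (cp_adj_rr.mp h).2 hadj
      have hdist : (compPrism T).dist (inr a) (inr b) = 2 :=
        dist_eq_two_of hne hna (w2 ha1 ha2) (w2_length ha1 ha2)
      rcases interval_len2 hdist hi with h | h | ⟨x, hx1, hx2, hwx⟩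
      · rw [h]; exact ⟨a, rfl⟩
      · rw [h]; exact ⟨b, rfl⟩
      · rw [hwx]
        cases x with
        | inl m =>
          exact absurd ((cp_adj_rl.mp hx1).trans (cp_adj_lr.mp hx2)) hab
        | inr m => exact ⟨m, rfl⟩
    · have hdist : (compPrism T).dist (inr a) (inr b) = 1 :=
        SimpleGraph.dist_eq_one_iff_adj.mpr (cp_adj_rr.mpr ⟨hab, hadj⟩)
      rcases interval_len1 hdist hi with h | h
      · rw [h]; exact ⟨a, rfl⟩
      · rw [h]; exact ⟨b, rfl⟩
  · intro h
    have : (inl u1 : V ⊕ V) ∈ Set.range (inr : V → V ⊕ V) := by rw [h]; trivial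
    obtain ⟨a, ha⟩ := this
    exact Sum.inl_ne_inr ha.symm
  · rw [← Set.image_univ, Set.ncard_image_of_injective _ Sum.inr_injective,
      Set.ncard_univ]

end CPAux

namespace CPAux
open SimpleGraph Sum

lemma interval_symm {W : Type*} {G : SimpleGraph W} {u v w : W}
    (h : inInterval G u v w) : inInterval G v u w := by
  obtain ⟨p, hp, hl, hw⟩ := h
  exact ⟨p.reverse, hp.reverse,
    by rw [SimpleGraph.Walk.length_reverse, hl, SimpleGraph.dist_comm],
    by rw [SimpleGraph.Walk.support_reverse]; exact List.mem_reverse.mpr hw⟩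

variable {V : Type*} [Fintype V] {T : SimpleGraph V}

lemma witness2 (hT : T.IsTree) (c : V) :
    IsGeoConvex (compPrism T)
      ((inl '' insert c (T.neighborSet c)) ∪ (inr '' (T.neighborSet c))) ∧
    (inr c : V ⊕ V) ∉
      ((inl '' insert c (T.neighborSet c)) ∪ (inr '' (T.neighborSet c))) ∧
    ((inl '' insert c (T.neighborSet c)) ∪ (inr '' (T.neighborSet c))).ncard
      = 2 * vdeg T c + 1 := by
  classical
  set N := T.neighborSet c with hN_def
  set S2 : Set (V ⊕ V) := (inl '' insert c N) ∪ (inr '' N) with hS2_def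
  have hmemN : ∀ {q : V}, q ∈ N → T.Adj c q := fun hq => hq
  refine ⟨?_, ?_, ?_⟩
  · -- convexity
    have key : ∀ p q (w : V ⊕ V), p ∈ insert c N → q ∈ N →
        inInterval (compPrism T) (inl p) (inr q) w → w ∈ S2 := by
      intro p q w hp hq hi
      rcases eq_or_ne p q with rfl | hpq
      · have hdist : (compPrism T).dist (inl p) (inr p) = 1 :=
          SimpleGraph.dist_eq_one_iff_adj.mpr rfl
        rcases interval_len1 hdist hi with h | h
        · exact Or.inl ⟨p, hp, h.symm⟩
        · exact Or.inr ⟨p, hq, h.symm⟩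
      by_cases hadj : T.Adj p q
      · have hpc : p = c := by
          rcases Set.mem_insert_iff.mp hp with h | hpN
          · exact h
          · exact (tree_no_triangle hT (hmemN hpN) hadj (hmemN hq)).elim
        subst hpc
        have ha1 : (compPrism T).Adj (inl p) (inl q) := hadj
        have ha2 : (compPrism T).Adj (inl q) (inr q) := rfl
        have hna : ¬(compPrism T).Adj (inl p) (inr q) := fun h => hpq (cp_adj_lr.mp h)
        have hdist : (compPrism T).dist (inl p) (inr q) = 2 :=
          dist_eq_two_of (by simp) hna (w2 ha1 ha2) (w2_length ha1 ha2)
        rcases interval_len2 hdist hi with h | h | ⟨x, hx1, hx2, hwx⟩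
        · exact Or.inl ⟨p, hp, h.symm⟩
        · exact Or.inr ⟨q, hq, h.symm⟩
        · rw [hwx]
          cases x with
          | inl m =>
            have hmq : m = q := cp_adj_lr.mp hx2
            exact Or.inl ⟨m, Set.mem_insert_of_mem _ (hmq ▸ hq), rfl⟩
          | inr m =>
            have hpm : p = m := cp_adj_lr.mp hx1
            have := (cp_adj_rr.mp (hpm ▸ hx2)).2
            exact absurd (hpm ▸ hadj) this
      · have hpN : p ∈ N := by
          rcases Set.mem_insert_iff.mp hp with h | hpN
          · exact absurd (h ▸ hmemN hq) hadj
          · exact hpN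
        have ha1 : (compPrism T).Adj (inl p) (inr p) := rfl
        have ha2 : (compPrism T).Adj (inr p) (inr q) := cp_adj_rr.mpr ⟨hpq, hadj⟩
        have hna : ¬(compPrism T).Adj (inl p) (inr q) := fun h => hpq (cp_adj_lr.mp h)
        have hdist : (compPrism T).dist (inl p) (inr q) = 2 :=
          dist_eq_two_of (by simp) hna (w2 ha1 ha2) (w2_length ha1 ha2)
        rcases interval_len2 hdist hi with h | h | ⟨x, hx1, hx2, hwx⟩
        · exact Or.inl ⟨p, hp, h.symm⟩
        · exact Or.inr ⟨q, hq, h.symm⟩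
        · rw [hwx]
          cases x with
          | inl m =>
            have hmq : m = q := cp_adj_lr.mp hx2
            exact absurd (hmq ▸ (cp_adj_ll.mp hx1)) hadj
          | inr m =>
            have hpm : p = m := cp_adj_lr.mp hx1
            exact Or.inr ⟨m, hpm ▸ hpN, rfl⟩
    intro u hu v hv w hi
    rcases hu with ⟨p, hp, rfl⟩ | ⟨p, hp, rfl⟩ <;> rcases hv with ⟨q, hq, rfl⟩ | ⟨q, hq, rfl⟩
    · -- inl , inl
      rcases eq_or_ne p q with rfl | hpq
      · have hdist : (compPrism T).dist (inl p) (inl p) = 0 := SimpleGraph.dist_self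
        rw [interval_len0 hdist hi]
        exact Or.inl ⟨p, hp, rfl⟩
      by_cases hadj : T.Adj p q
      · have hdist : (compPrism T).dist (inl p) (inl q) = 1 :=
          SimpleGraph.dist_eq_one_iff_adj.mpr hadj
        rcases interval_len1 hdist hi with h | h
        · rw [h]; exact Or.inl ⟨p, hp, rfl⟩
        · rw [h]; exact Or.inl ⟨q, hq, rfl⟩
      · have hpN : p ∈ N := by
          rcases Set.mem_insert_iff.mp hp with h | h
          · subst h
            rcases Set.mem_insert_iff.mp hq with h' | h'
            · exact absurd h'.symm hpq
            · exact absurd (hmemN h') hadj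
          · exact h
        have hqN : q ∈ N := by
          rcases Set.mem_insert_iff.mp hq with h | h
          · subst h
            exact absurd (hmemN hpN).symm hadj
          · exact h
        have ha1 : (compPrism T).Adj (inl p) (inl c) := (hmemN hpN).symm
        have ha2 : (compPrism T).Adj (inl c) (inl q) := hmemN hqN
        have hne : (inl p : V ⊕ V) ≠ inl q := fun h => hpq (inl_injective h)
        have hna : ¬(compPrism T).Adj (inl p) (inl q) := hadj
        have hdist : (compPrism T).dist (inl p) (inl q) = 2 :=
          dist_eq_two_of hne hna (w2 ha1 ha2) (w2_length ha1 ha2)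
        rcases interval_len2 hdist hi with h | h | ⟨x, hx1, hx2, hwx⟩
        · rw [h]; exact Or.inl ⟨p, hp, rfl⟩
        · rw [h]; exact Or.inl ⟨q, hq, rfl⟩
        · rw [hwx]
          cases x with
          | inl m =>
            have hmc : m = c :=
              tree_common_nbr_unique hT hpq (cp_adj_ll.mp hx1) (cp_adj_ll.mp hx2)
                (hmemN hpN).symm (hmemN hqN)
            exact Or.inl ⟨m, hmc ▸ Set.mem_insert _ _, rfl⟩
          | inr m =>
            exact absurd ((cp_adj_lr.mp hx1).trans (cp_adj_rl.mp hx2)) hpq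
    · exact key p q w hp hq hi
    · exact key q p w hq hp (interval_symm hi)
    · -- inr, inr
      rcases eq_or_ne p q with rfl | hpq
      · have hdist : (compPrism T).dist (inr p) (inr p) = 0 := SimpleGraph.dist_self
        rw [interval_len0 hdist hi]
        exact Or.inr ⟨p, hp, rfl⟩
      · have hnadj : ¬T.Adj p q := fun h => tree_no_triangle hT (hmemN hp) h (hmemN hq)
        have hdist : (compPrism T).dist (inr p) (inr q) = 1 :=
          SimpleGraph.dist_eq_one_iff_adj.mpr (cp_adj_rr.mpr ⟨hpq, hnadj⟩)
        rcases interval_len1 hdist hi with h | h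
        · rw [h]; exact Or.inr ⟨p, hp, rfl⟩
        · rw [h]; exact Or.inr ⟨q, hq, rfl⟩
  · -- inr c not in the set
    rintro (⟨p, hp, heq⟩ | ⟨p, hp, heq⟩)
    · exact Sum.inl_ne_inr heq
    · have : p = c := inr_injective heq
      exact T.irrefl (hmemN (this ▸ hp))
  · -- cardinality
    have hcN : c ∉ N := fun h => T.irrefl (hmemN h)
    rw [Set.ncard_union_eq (by
        rw [Set.disjoint_left]; rintro _ ⟨v, -, rfl⟩ ⟨w', -, h⟩; exact Sum.inl_ne_inr h.symm)
      (Set.toFinite _) (Set.toFinite _),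
      Set.ncard_image_of_injective _ Sum.inl_injective,
      Set.ncard_image_of_injective _ Sum.inr_injective,
      Set.ncard_insert_of_notMem hcN (Set.toFinite _)]
    unfold vdeg
    rw [← hN_def]
    omega

end CPAux

theorem stmt7 {V : Type*} [Fintype V] (T : SimpleGraph V) (hT : T.IsTree)
    (hd : 5 ≤ graphDiam T) :
    convexityNumber (compPrism T) = max (Nat.card V) (2 * maxDeg T + 1) := by
  classical
  obtain ⟨u1, u2, hu⟩ := CPAux.diam_pair hd
  have hconn : T.Connected := hT.isConnected
  -- a vertex of maximum degree
  have hbddD : BddAbove {d | ∃ v : V, vdeg T v = d} := by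
    refine ⟨Fintype.card V, ?_⟩
    rintro d ⟨v, rfl⟩
    calc vdeg T v ≤ (Set.univ : Set V).ncard :=
          Set.ncard_le_ncard (Set.subset_univ _) (Set.toFinite _)
      _ = Fintype.card V := by rw [Set.ncard_univ, Nat.card_eq_fintype_card]
  have hDne : {d | ∃ v : V, vdeg T v = d}.Nonempty := ⟨vdeg T u1, u1, rfl⟩
  obtain ⟨c, hc⟩ : ∃ c, vdeg T c = maxDeg T := Nat.sSup_mem hDne hbddD
  set M := {n | ∃ S : Set (V ⊕ V),
      IsGeoConvex (compPrism T) S ∧ S ≠ Set.univ ∧ S.ncard = n} with hM_def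
  have hub : ∀ k ∈ M, k ≤ max (Nat.card V) (2 * maxDeg T + 1) := by
    rintro k ⟨S, hSc, hSne, rfl⟩
    by_contra hgt
    push_neg at hgt
    rw [max_lt_iff] at hgt
    have h1 : Fintype.card V + 1 ≤ S.ncard := by
      have := hgt.1; rw [Nat.card_eq_fintype_card] at this; omega
    have h2 : 2 * maxDeg T + 2 ≤ S.ncard := by have := hgt.2; omega
    exact hSne (CPAux.main_upper hT hu S hSc h1 h2)
  have hw1 := CPAux.witness1 hconn ⟨u1, u2, hu⟩
  have h1M : Nat.card V ∈ M := ⟨_, hw1.1, hw1.2.1, hw1.2.2⟩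
  have hw2 := CPAux.witness2 hT c
  have h2M : 2 * maxDeg T + 1 ∈ M := by
    refine ⟨_, hw2.1, ?_, ?_⟩
    · intro heq
      apply hw2.2.1
      rw [heq]; trivial
    · rw [hw2.2.2, hc]
  have hbddM : BddAbove M := ⟨max (Nat.card V) (2 * maxDeg T + 1), fun k hk => hub k hk⟩
  show sSup M = _
  apply le_antisymm
  · exact csSup_le ⟨_, h1M⟩ hub
  · exact max_le (le_csSup hbddM h1M) (le_csSup hbddM h2M)
end

section
/- If T is a tree with diameter 3, then the convexity number of the complementary prism TT̄ equals n(T) + Δ(T) − 1. -/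
open SimpleGraph

set_option linter.unusedSectionVars false
set_option linter.unusedVariables false
set_option maxHeartbeats 1000000


section Prelim

variable {W : Type*} {H : SimpleGraph W}

lemma dist_add_dist_le_of_mem_support {x y z : W} (p : H.Walk x y) (h : z ∈ p.support) :
    H.dist x z + H.dist z y ≤ p.length := by
  classical
  have hs := p.take_spec h
  have hl := congr_arg Walk.length hs
  rw [Walk.length_append] at hl
  calc H.dist x z + H.dist z y ≤ (p.takeUntil z h).length + (p.dropUntil z h).length :=
        Nat.add_le_add (SimpleGraph.dist_le _) (SimpleGraph.dist_le _)
    _ = p.length := hl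

lemma dist_le_of_mem_support {x y z : W} (p : H.Walk x y) (h : z ∈ p.support) :
    H.dist x z ≤ p.length :=
  le_trans (Nat.le_add_right _ _) (dist_add_dist_le_of_mem_support p h)

lemma dist_eq_two_of {u v x : W} (hne : u ≠ v) (hna : ¬ H.Adj u v)
    (h1 : H.Adj u x) (h2 : H.Adj x v) : H.dist u v = 2 := by
  have hle : H.dist u v ≤ 2 := by
    have := SimpleGraph.dist_le (Walk.cons h1 (Walk.cons h2 Walk.nil))
    simpa using this
  have h0 : H.dist u v ≠ 0 := by
    rw [SimpleGraph.dist_ne_zero_iff_ne_and_reachable]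
    exact ⟨hne, Walk.reachable (Walk.cons h1 (Walk.cons h2 Walk.nil))⟩
  have h1' : H.dist u v ≠ 1 := by
    rw [ne_eq, SimpleGraph.dist_eq_one_iff_adj]; exact hna
  omega

end Prelim

section Tree

variable {V : Type*} [Fintype V] {T : SimpleGraph V}

lemma tree_bridge (hT : T.IsTree) {a b : V} (hab : T.Adj a b) (p : T.Walk a b) :
    s(a, b) ∈ p.edges := by
  have h := (isAcyclic_iff_forall_edge_isBridge.mp hT.2) (T.mem_edgeSet.mpr hab)
  exact (isBridge_iff_adj_and_forall_walk_mem_edges.mp h) p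

lemma tree_noTri (hT : T.IsTree) {a b e : V} (h1 : T.Adj a b) (h2 : T.Adj b e)
    (h3 : T.Adj e a) : False := by
  have := tree_bridge hT h1 (Walk.cons h3.symm (Walk.cons h2.symm Walk.nil))
  simp only [Walk.edges_cons, Walk.edges_nil, List.mem_cons, List.not_mem_nil, or_false] at this
  rcases this with h | h
  · rcases Sym2.eq_iff.mp h with ⟨ha, hb⟩ | ⟨ha, hb⟩
    · exact h2.ne hb
    · exact h3.ne ha.symm
  · rcases Sym2.eq_iff.mp h with ⟨ha, hb⟩ | ⟨ha, hb⟩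
    · exact h3.ne ha.symm
    · exact h1.ne ha

lemma tree_noC4 (hT : T.IsTree) {a b e f : V} (h1 : T.Adj a b) (h2 : T.Adj b e)
    (h3 : T.Adj e f) (h4 : T.Adj f a) (hae : a ≠ e) (hbf : b ≠ f) : False := by
  have := tree_bridge hT h1
    (Walk.cons h4.symm (Walk.cons h3.symm (Walk.cons h2.symm Walk.nil)))
  simp only [Walk.edges_cons, Walk.edges_nil, List.mem_cons, List.not_mem_nil, or_false] at this
  rcases this with h | h | h
  · rcases Sym2.eq_iff.mp h with ⟨ha, hb⟩ | ⟨ha, hb⟩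
    · exact hbf hb
    · exact h4.ne ha.symm
  · rcases Sym2.eq_iff.mp h with ⟨ha, hb⟩ | ⟨ha, hb⟩
    · exact h4.ne ha.symm
    · exact hae ha
  · rcases Sym2.eq_iff.mp h with ⟨ha, hb⟩ | ⟨ha, hb⟩
    · exact hae ha
    · exact h1.ne ha

end Tree
section Tree2

variable {V : Type*} [Fintype V] {T : SimpleGraph V}

lemma diam_bound (hT : T.IsTree) (hd : graphDiam T = 3) : ∀ x y : V, T.dist x y ≤ 3 := by
  intro x y
  have hd' : sSup {d | ∃ u v : V, T.dist u v = d} = 3 := hd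
  have hb : BddAbove {d | ∃ u v : V, T.dist u v = d} := by
    refine ⟨Fintype.card V, fun k hk => ?_⟩
    obtain ⟨u, v, rfl⟩ := hk
    obtain ⟨p, hp, hl⟩ := (hT.isConnected (V := V)).exists_path_of_dist u v
    rw [← hl]
    exact le_of_lt hp.length_lt
  have := le_csSup hb (show T.dist x y ∈ {d | ∃ u v : V, T.dist u v = d} from ⟨x, y, rfl⟩)
  rwa [hd'] at this

lemma exists_dist3 (hT : T.IsTree) (hd : graphDiam T = 3) : ∃ u v : V, T.dist u v = 3 := by
  have hb : BddAbove {d | ∃ u v : V, T.dist u v = d} := by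
    refine ⟨Fintype.card V, fun k hk => ?_⟩
    obtain ⟨u, v, rfl⟩ := hk
    obtain ⟨p, hp, hl⟩ := (hT.isConnected (V := V)).exists_path_of_dist u v
    rw [← hl]
    exact le_of_lt hp.length_lt
  have hne : {d | ∃ u v : V, T.dist u v = d}.Nonempty := by
    by_contra h
    rw [Set.not_nonempty_iff_eq_empty] at h
    have hd' : sSup {d | ∃ u v : V, T.dist u v = d} = 3 := hd
    rw [h] at hd'
    simp at hd'
  have := Nat.sSup_mem hne hb
  have hd' : sSup {d | ∃ u v : V, T.dist u v = d} = 3 := hd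
  rw [hd'] at this
  exact this

/-- Double star structure: `c, d` centers. -/
structure DS (T : SimpleGraph V) (c d : V) : Prop where
  hcd : T.Adj c d
  cover : ∀ x, x = c ∨ x = d ∨ T.Adj c x ∨ T.Adj d x
  excl : ∀ x, ¬(T.Adj c x ∧ T.Adj d x)
  leafc : ∀ x y, T.Adj c x → x ≠ d → T.Adj x y → y = c
  leafd : ∀ x y, T.Adj d x → x ≠ c → T.Adj x y → y = d
  exc : ∃ x, T.Adj c x ∧ x ≠ d
  exd : ∃ x, T.Adj d x ∧ x ≠ c

lemma DS.symm {c d : V} (h : DS T c d) : DS T d c :=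
  ⟨h.hcd.symm, fun x => by have := h.cover x; tauto,
   fun x hx => h.excl x ⟨hx.2, hx.1⟩, h.leafd, h.leafc, h.exd, h.exc⟩

/-- The auxiliary contradiction for the cover proof. -/
lemma aux_cover (hT : T.IsTree) (hd : graphDiam T = 3) {a b w x : V}
    (hab : T.Adj a b) (hwa : T.Adj w a) (hwb : w ≠ b)
    (h3 : T.dist x a = 3) (h2 : T.dist x b = 2) : False := by
  classical
  have hreach : ∀ s t : V, T.Reachable s t := fun s t => hT.isConnected s t
  obtain ⟨Q, hQp, hQl⟩ := (hreach x b).exists_path_of_dist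
  obtain ⟨R, hRp, hRl⟩ := (hreach x w).exists_path_of_dist
  have hRle : R.length ≤ 3 := by rw [hRl]; exact diam_bound hT hd x w
  -- composite walk from b to a
  have hba : T.Adj b a := hab.symm
  let W : T.Walk b a := (Q.reverse.append R).append (Walk.cons hwa Walk.nil)
  have hmem := tree_bridge hT hba W
  have hedges : W.edges = (Q.reverse.edges ++ R.edges) ++ [s(w, a)] := by
    simp [W, Walk.edges_append]
  rw [hedges] at hmem
  simp only [List.mem_append, List.mem_cons, List.not_mem_nil, or_false] at hmem
  rcases hmem with (hm | hm) | hm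
  · -- in Q.edges : a ∈ Q.support, dist x a ≤ 2
    rw [Walk.edges_reverse, List.mem_reverse] at hm
    have ha : a ∈ Q.support := Walk.snd_mem_support_of_mem_edges Q hm
    have := dist_le_of_mem_support Q ha
    rw [hQl, h2] at this
    omega
  · -- in R.edges : a ∈ R.support, dist x a + dist a w ≤ 3
    have ha : a ∈ R.support := Walk.snd_mem_support_of_mem_edges R hm
    have h4 := dist_add_dist_le_of_mem_support R ha
    have haw : T.dist a w = 1 := SimpleGraph.dist_eq_one_iff_adj.mpr hwa.symm
    rw [h3, haw] at h4
    omega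
  · -- s(b,a) = s(w,a)
    rcases Sym2.eq_iff.mp hm with ⟨h5, h6⟩ | ⟨h5, h6⟩
    · exact hwb h5.symm
    · exact hab.ne h5.symm

end Tree2
section Tree3

variable {V : Type*} [Fintype V] {T : SimpleGraph V}

lemma leaf_lemma (hT : T.IsTree) {c d : V} (hcd : T.Adj c d)
    (cover : ∀ x, x = c ∨ x = d ∨ T.Adj c x ∨ T.Adj d x) :
    ∀ x y, T.Adj c x → x ≠ d → T.Adj x y → y = c := by
  intro x y hcx hxd hxy
  by_contra hyc
  have hyd : y ≠ d := by
    rintro rfl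
    exact tree_noTri hT hcd hxy.symm hcx.symm
  rcases cover y with rfl | rfl | h | h
  · exact hyc rfl
  · exact hyd rfl
  · exact tree_noTri hT hcx hxy h.symm
  · exact tree_noC4 hT hcx hxy h.symm hcd.symm (fun he => hyc he.symm) hxd

lemma exists_DS (hT : T.IsTree) (hd : graphDiam T = 3) : ∃ c d : V, DS T c d := by
  classical
  obtain ⟨u, v, huv⟩ := exists_dist3 hT hd
  obtain ⟨p, hp, hl⟩ := (hT.isConnected u v).exists_path_of_dist
  rw [huv] at hl
  cases p with
  | nil => simp at hl
  | cons h1 p1 =>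
    rename_i c
    cases p1 with
    | nil => simp at hl
    | cons h2 p2 =>
      rename_i d
      cases p2 with
      | nil => simp at hl
      | cons h3 p3 =>
        rename_i v'
        cases p3 with
        | cons h4 p4 =>
          simp only [Walk.length_cons] at hl
          omega
        | nil =>
          -- h1 : T.Adj u c, h2 : T.Adj c d, h3 : T.Adj d v
          have hnd := hp.support_nodup
          simp only [Walk.support_cons, Walk.support_nil, List.nodup_cons, List.mem_cons,
            List.mem_singleton, List.not_mem_nil, or_false, List.nodup_nil, and_true] at hnd
          push_neg at hnd
          obtain ⟨⟨huc, hud, huv'⟩, ⟨hcd, hcv⟩, hdv⟩ := hnd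
          -- distances
          have hnadj_ud : ¬ T.Adj u d := by
            intro h
            have := SimpleGraph.dist_le (Walk.cons h (Walk.cons h3 Walk.nil))
            rw [huv] at this; simp at this
          have hnadj_cv : ¬ T.Adj c v := by
            intro h
            have := SimpleGraph.dist_le (Walk.cons h1 (Walk.cons h Walk.nil))
            rw [huv] at this; simp at this
          have h_ud2 : T.dist u d = 2 := dist_eq_two_of hud hnadj_ud h1 h2
          have h_cv2 : T.dist c v = 2 := dist_eq_two_of hcv hnadj_cv h2 h3
          have hreach : ∀ s t : V, T.Reachable s t := fun s t => hT.isConnected s t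
          -- cover
          have cover : ∀ x, x = c ∨ x = d ∨ T.Adj c x ∨ T.Adj d x := by
            intro x
            by_contra hx
            push_neg at hx
            obtain ⟨hxc, hxd, hax, hax'⟩ := hx
            have hf2 : 2 ≤ T.dist x c := by
              have h0 : T.dist x c ≠ 0 := by
                rw [SimpleGraph.dist_ne_zero_iff_ne_and_reachable]
                exact ⟨hxc, hreach x c⟩
              have h1' : T.dist x c ≠ 1 := by
                rw [ne_eq, SimpleGraph.dist_eq_one_iff_adj]
                exact fun h => hax h.symm
              omega
            have hg2 : 2 ≤ T.dist x d := by
              have h0 : T.dist x d ≠ 0 := by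
                rw [SimpleGraph.dist_ne_zero_iff_ne_and_reachable]
                exact ⟨hxd, hreach x d⟩
              have h1' : T.dist x d ≠ 1 := by
                rw [ne_eq, SimpleGraph.dist_eq_one_iff_adj]
                exact fun h => hax' h.symm
              omega
            have hf3 : T.dist x c ≤ 3 := diam_bound hT hd x c
            have hg3 : T.dist x d ≤ 3 := diam_bound hT hd x d
            obtain ⟨P, hPp, hPl⟩ := (hreach x c).exists_path_of_dist
            obtain ⟨Q, hQp, hQl⟩ := (hreach x d).exists_path_of_dist
            have hmem := tree_bridge hT h2 (P.reverse.append Q)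
            rw [Walk.edges_append] at hmem
            rcases List.mem_append.mp hmem with hm | hm
            · rw [Walk.edges_reverse, List.mem_reverse] at hm
              have hdP : d ∈ P.support := Walk.snd_mem_support_of_mem_edges P hm
              have hle := dist_add_dist_le_of_mem_support P hdP
              have hdc1 : T.dist d c = 1 := SimpleGraph.dist_eq_one_iff_adj.mpr h2.symm
              rw [hPl, hdc1] at hle
              -- dist x d + 1 ≤ dist x c : so dist x c = 3, dist x d = 2
              exact aux_cover hT hd (x := x) h2 h1 hud (by omega) (by omega)
            · have hcQ : c ∈ Q.support := Walk.fst_mem_support_of_mem_edges Q hm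
              have hle := dist_add_dist_le_of_mem_support Q hcQ
              have hcd1 : T.dist c d = 1 := SimpleGraph.dist_eq_one_iff_adj.mpr h2
              rw [hQl, hcd1] at hle
              exact aux_cover hT hd (x := x) h2.symm h3.symm (fun he => hcv he.symm)
                (by omega) (by omega)
          have excl : ∀ x, ¬(T.Adj c x ∧ T.Adj d x) := by
            rintro x ⟨hc, hdx⟩
            exact tree_noTri hT h2 hdx hc.symm
          have cover' : ∀ x, x = d ∨ x = c ∨ T.Adj d x ∨ T.Adj c x := by
            intro x; have := cover x; tauto
          exact ⟨c, d, ⟨h2, cover, excl, leaf_lemma hT h2 cover, leaf_lemma hT h2.symm cover',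
            ⟨u, h1.symm, hud⟩, ⟨v, h3, fun he => hcv he.symm⟩⟩⟩

end Tree3
section DSfacts

variable {V : Type*} [Fintype V] {T : SimpleGraph V}

/-- The leaves attached to `c` (when `c, d` are the two centers). -/
def Lv (T : SimpleGraph V) (c d : V) : Set V := {x | T.Adj c x ∧ x ≠ d}

variable {c d : V}

lemma Lv_mem {x : V} : x ∈ Lv T c d ↔ T.Adj c x ∧ x ≠ d := Iff.rfl

lemma DS.c_ne_d (h : DS T c d) : c ≠ d := h.hcd.ne

lemma DS.c_not_mem_Lc (h : DS T c d) : c ∉ Lv T c d := fun hx => T.loopless.irrefl c hx.1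
lemma DS.d_not_mem_Lc (h : DS T c d) : d ∉ Lv T c d := fun hx => hx.2 rfl
lemma DS.c_not_mem_Ld (h : DS T c d) : c ∉ Lv T d c := fun hx => hx.2 rfl
lemma DS.d_not_mem_Ld (h : DS T c d) : d ∉ Lv T d c := fun hx => T.loopless.irrefl d hx.1

lemma DS.Lc_Ld_disj (h : DS T c d) : Lv T c d ∩ Lv T d c = ∅ := by
  ext x
  simp only [Set.mem_inter_iff, Set.mem_empty_iff_false, iff_false]
  rintro ⟨⟨h1, _⟩, ⟨h2, _⟩⟩
  exact h.excl x ⟨h1, h2⟩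

lemma DS.classify (h : DS T c d) (x : V) :
    x = c ∨ x = d ∨ x ∈ Lv T c d ∨ x ∈ Lv T d c := by
  rcases h.cover x with rfl | rfl | hx | hx
  · exact Or.inl rfl
  · exact Or.inr (Or.inl rfl)
  · by_cases hxd : x = d
    · exact Or.inr (Or.inl hxd)
    · exact Or.inr (Or.inr (Or.inl ⟨hx, hxd⟩))
  · by_cases hxc : x = c
    · exact Or.inl hxc
    · exact Or.inr (Or.inr (Or.inr ⟨hx, hxc⟩))

lemma DS.adj_c_iff (h : DS T c d) {y : V} : T.Adj c y ↔ y = d ∨ y ∈ Lv T c d := by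
  constructor
  · intro hy
    by_cases hyd : y = d
    · exact Or.inl hyd
    · exact Or.inr ⟨hy, hyd⟩
  · rintro (rfl | hy)
    · exact h.hcd
    · exact hy.1

lemma DS.leaf_adj_c (h : DS T c d) {x y : V} (hx : x ∈ Lv T c d) (hxy : T.Adj x y) :
    y = c := h.leafc x y hx.1 hx.2 hxy

lemma DS.leaf_adj_d (h : DS T c d) {x y : V} (hx : x ∈ Lv T d c) (hxy : T.Adj x y) :
    y = d := h.leafd x y hx.1 hx.2 hxy

lemma DS.not_adj_c_of_Ld (h : DS T c d) {m : V} (hm : m ∈ Lv T d c) : ¬ T.Adj c m :=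
  fun ha => h.excl m ⟨ha, hm.1⟩

lemma DS.not_adj_d_of_Lc (h : DS T c d) {l : V} (hl : l ∈ Lv T c d) : ¬ T.Adj d l :=
  fun ha => h.excl l ⟨hl.1, ha⟩

lemma DS.not_adj_leaves (h : DS T c d) {l m : V} (hl : l ∈ Lv T c d) (hm : m ∈ Lv T d c) :
    ¬ T.Adj l m := by
  intro ha
  have hmc := h.leaf_adj_c hl ha
  rw [hmc] at hm
  exact h.c_not_mem_Ld hm

lemma DS.not_adj_leaves_cc (h : DS T c d) {l m : V} (hl : l ∈ Lv T c d) (hm : m ∈ Lv T c d)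
    (hne : l ≠ m) : ¬ T.Adj l m := by
  intro ha
  have := h.leaf_adj_c hl ha
  rw [this] at hm
  exact h.c_not_mem_Lc hm

lemma DS.neighborSet_c (h : DS T c d) : T.neighborSet c = insert d (Lv T c d) := by
  ext y
  simp only [mem_neighborSet, Set.mem_insert_iff]
  exact h.adj_c_iff

lemma DS.neighborSet_leaf_c (h : DS T c d) {l : V} (hl : l ∈ Lv T c d) :
    T.neighborSet l = {c} := by
  ext y
  simp only [mem_neighborSet, Set.mem_singleton_iff]
  constructor
  · exact fun hy => h.leaf_adj_c hl hy
  · rintro rfl; exact hl.1.symm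

lemma DS.vdeg_c (h : DS T c d) : vdeg T c = (Lv T c d).ncard + 1 := by
  rw [vdeg, h.neighborSet_c, Set.ncard_insert_of_notMem h.d_not_mem_Lc (Set.toFinite _)]

lemma DS.vdeg_leaf_c (h : DS T c d) {l : V} (hl : l ∈ Lv T c d) : vdeg T l = 1 := by
  rw [vdeg, h.neighborSet_leaf_c hl, Set.ncard_singleton]

lemma DS.Lc_nonempty (h : DS T c d) : (Lv T c d).Nonempty := by
  obtain ⟨x, hx1, hx2⟩ := h.exc
  exact ⟨x, hx1, hx2⟩

lemma DS.card_V (h : DS T c d) :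
    Nat.card V = (Lv T c d).ncard + (Lv T d c).ncard + 2 := by
  have huniv : (Set.univ : Set V) = insert c (insert d (Lv T c d ∪ Lv T d c)) := by
    ext x
    simp only [Set.mem_univ, true_iff, Set.mem_insert_iff, Set.mem_union]
    rcases h.classify x with rfl | rfl | hx | hx
    · exact Or.inl rfl
    · exact Or.inr (Or.inl rfl)
    · exact Or.inr (Or.inr (Or.inl hx))
    · exact Or.inr (Or.inr (Or.inr hx))
  have h1 : c ∉ insert d (Lv T c d ∪ Lv T d c) := by
    simp only [Set.mem_insert_iff, Set.mem_union]
    push_neg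
    exact ⟨h.c_ne_d, h.c_not_mem_Lc, h.c_not_mem_Ld⟩
  have h2 : d ∉ Lv T c d ∪ Lv T d c := by
    simp only [Set.mem_union]
    push_neg
    exact ⟨h.d_not_mem_Lc, h.d_not_mem_Ld⟩
  have h3 : (Lv T c d ∪ Lv T d c).ncard = (Lv T c d).ncard + (Lv T d c).ncard := by
    rw [Set.ncard_union_eq _ (Set.toFinite _) (Set.toFinite _)]
    rw [Set.disjoint_iff_inter_eq_empty]
    exact h.Lc_Ld_disj
  rw [← Set.ncard_univ, huniv,
    Set.ncard_insert_of_notMem h1 (Set.toFinite _),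
    Set.ncard_insert_of_notMem h2 (Set.toFinite _), h3]

lemma DS.maxDeg_eq (h : DS T c d) :
    maxDeg T = max (Lv T c d).ncard (Lv T d c).ncard + 1 := by
  have hsym := h.symm
  have hub : ∀ k ∈ {k | ∃ v, vdeg T v = k},
      k ≤ max (Lv T c d).ncard (Lv T d c).ncard + 1 := by
    rintro k ⟨x, rfl⟩
    rcases h.classify x with rfl | rfl | hx | hx
    · rw [h.vdeg_c]; omega
    · rw [hsym.vdeg_c]; omega
    · rw [h.vdeg_leaf_c hx]; omega
    · rw [hsym.vdeg_leaf_c hx]; omega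
  have hbdd : BddAbove {k | ∃ v, vdeg T v = k} :=
    ⟨max (Lv T c d).ncard (Lv T d c).ncard + 1, fun k hk => hub k hk⟩
  have hmem1 : (Lv T c d).ncard + 1 ∈ {k | ∃ v, vdeg T v = k} := ⟨c, h.vdeg_c⟩
  have hmem2 : (Lv T d c).ncard + 1 ∈ {k | ∃ v, vdeg T v = k} := ⟨d, hsym.vdeg_c⟩
  have hle : maxDeg T ≤ max (Lv T c d).ncard (Lv T d c).ncard + 1 :=
    csSup_le ⟨_, hmem1⟩ hub
  have hge1 : (Lv T c d).ncard + 1 ≤ maxDeg T := le_csSup hbdd hmem1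
  have hge2 : (Lv T d c).ncard + 1 ≤ maxDeg T := le_csSup hbdd hmem2
  have : max (Lv T c d).ncard (Lv T d c).ncard + 1 ≤ maxDeg T := by
    rcases max_cases (Lv T c d).ncard (Lv T d c).ncard with ⟨he, _⟩ | ⟨he, _⟩ <;> omega
  omega

end DSfacts
section Prism

variable {V : Type*} {G : SimpleGraph V}

lemma cp_adj_ll {a b : V} : (compPrism G).Adj (Sum.inl a) (Sum.inl b) ↔ G.Adj a b := Iff.rfl

lemma cp_adj_rr {a b : V} : (compPrism G).Adj (Sum.inr a) (Sum.inr b) ↔ a ≠ b ∧ ¬ G.Adj a b := by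
  show Gᶜ.Adj a b ↔ _
  rw [compl_adj]

lemma cp_adj_lr {a b : V} : (compPrism G).Adj (Sum.inl a) (Sum.inr b) ↔ a = b := Iff.rfl

lemma cp_adj_rl {a b : V} : (compPrism G).Adj (Sum.inr a) (Sum.inl b) ↔ a = b := Iff.rfl

end Prism

section Interval

variable {W : Type*} {H : SimpleGraph W}

lemma dist_eq_three_of {u v x y : W} (hne : u ≠ v) (hna : ¬ H.Adj u v)
    (hno : ∀ w, ¬(H.Adj u w ∧ H.Adj w v))
    (h1 : H.Adj u x) (h2 : H.Adj x y) (h3 : H.Adj y v) : H.dist u v = 3 := by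
  have hle : H.dist u v ≤ 3 := by
    have := SimpleGraph.dist_le (Walk.cons h1 (Walk.cons h2 (Walk.cons h3 Walk.nil)))
    simpa using this
  have h0 : H.dist u v ≠ 0 := by
    rw [SimpleGraph.dist_ne_zero_iff_ne_and_reachable]
    exact ⟨hne, Walk.reachable (Walk.cons h1 (Walk.cons h2 (Walk.cons h3 Walk.nil)))⟩
  have h1' : H.dist u v ≠ 1 := by
    rw [ne_eq, SimpleGraph.dist_eq_one_iff_adj]; exact hna
  have h2' : H.dist u v ≠ 2 := by
    intro hd
    obtain ⟨p, hp⟩ := SimpleGraph.exists_walk_of_dist_ne_zero (G := H) (u := u) (v := v) (by omega)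
    rw [hd] at hp
    cases p with
    | nil => simp at hp
    | cons ha q =>
      cases q with
      | nil => simp at hp
      | cons hb r =>
        cases r with
        | nil => exact hno _ ⟨ha, hb⟩
        | cons hc s => simp [Walk.length_cons] at hp
  omega

lemma inInterval_symm {u v w : W} (h : inInterval H u v w) : inInterval H v u w := by
  obtain ⟨p, hp, hl, hw⟩ := h
  exact ⟨p.reverse, hp.reverse, by rw [Walk.length_reverse, hl, SimpleGraph.dist_comm],
    by rwa [Walk.support_reverse, List.mem_reverse]⟩

lemma interval_self {u w : W} (h : inInterval H u u w) : w = u := by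
  obtain ⟨p, hp, hl, hw⟩ := h
  rw [SimpleGraph.dist_self] at hl
  cases p with
  | nil => simpa using hw
  | cons ha q => simp at hl

lemma interval_dist1 {u v w : W} (hadj : H.Adj u v) (h : inInterval H u v w) :
    w = u ∨ w = v := by
  obtain ⟨p, hp, hl, hw⟩ := h
  rw [SimpleGraph.dist_eq_one_iff_adj.mpr hadj] at hl
  cases p with
  | nil => simp at hl
  | cons ha q =>
    cases q with
    | nil => simpa using hw
    | cons hb r => simp [Walk.length_cons] at hl

lemma interval_dist2 {u v w : W} (hd : H.dist u v = 2) (h : inInterval H u v w) :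
    w = u ∨ w = v ∨ (H.Adj u w ∧ H.Adj w v) := by
  obtain ⟨p, hp, hl, hw⟩ := h
  rw [hd] at hl
  cases p with
  | nil => simp at hl
  | cons ha q =>
    cases q with
    | nil => simp at hl
    | cons hb r =>
      cases r with
      | nil =>
        simp only [Walk.support_cons, Walk.support_nil, List.mem_cons,
          List.not_mem_nil, or_false] at hw
        rcases hw with rfl | rfl | rfl
        · exact Or.inl rfl
        · exact Or.inr (Or.inr ⟨ha, hb⟩)
        · exact Or.inr (Or.inl rfl)
      | cons hc s => simp [Walk.length_cons] at hl

lemma convex_mid {S : Set W} (hS : IsGeoConvex H S) {u v x : W} (hu : u ∈ S) (hv : v ∈ S)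
    (hd : H.dist u v = 2) (h1 : H.Adj u x) (h2 : H.Adj x v) : x ∈ S := by
  have huv : u ≠ v := by
    intro h
    rw [h, SimpleGraph.dist_self] at hd
    omega
  refine hS u hu v hv x ⟨Walk.cons h1 (Walk.cons h2 Walk.nil), ?_, by simpa using hd.symm, by simp⟩
  rw [Walk.isPath_def]
  simp only [Walk.support_cons, Walk.support_nil]
  refine List.nodup_cons.mpr ⟨?_, List.nodup_cons.mpr ⟨?_, List.nodup_singleton _⟩⟩
  · simp only [List.mem_cons, List.not_mem_nil, or_false]
    push_neg
    exact ⟨h1.ne, huv⟩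
  · simp only [List.mem_singleton]
    exact h2.ne

lemma convex_mid3 {S : Set W} (hS : IsGeoConvex H S) {u v x y : W} (hu : u ∈ S) (hv : v ∈ S)
    (hd : H.dist u v = 3) (h1 : H.Adj u x) (h2 : H.Adj x y) (h3 : H.Adj y v)
    (huy : u ≠ y) (huv : u ≠ v) (hxv : x ≠ v) : x ∈ S ∧ y ∈ S := by
  have hpath : (Walk.cons h1 (Walk.cons h2 (Walk.cons h3 Walk.nil)) : H.Walk u v).IsPath := by
    rw [Walk.isPath_def]
    simp only [Walk.support_cons, Walk.support_nil]
    refine List.nodup_cons.mpr ⟨?_, List.nodup_cons.mpr ⟨?_,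
      List.nodup_cons.mpr ⟨?_, List.nodup_singleton _⟩⟩⟩
    · simp only [List.mem_cons, List.not_mem_nil, or_false]
      push_neg
      exact ⟨h1.ne, huy, huv⟩
    · simp only [List.mem_cons, List.not_mem_nil, or_false]
      push_neg
      exact ⟨h2.ne, hxv⟩
    · simp only [List.mem_singleton]
      exact h3.ne
  constructor
  · exact hS u hu v hv x ⟨_, hpath, by simpa using hd.symm, by simp⟩
  · exact hS u hu v hv y ⟨_, hpath, by simpa using hd.symm, by simp⟩

end Interval
section Rules

variable {V : Type*} [Fintype V] {T : SimpleGraph V} {c d : V}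

lemma cp_dist_lr {x y : V} (hne : x ≠ y) :
    (compPrism T).dist (Sum.inl x) (Sum.inr y) = 2 := by
  have hne' : (Sum.inl x : V ⊕ V) ≠ Sum.inr y := by simp
  have hna : ¬ (compPrism T).Adj (Sum.inl x) (Sum.inr y) := by
    rw [cp_adj_lr]; exact hne
  by_cases hA : T.Adj x y
  · exact dist_eq_two_of hne' hna (cp_adj_ll.mpr hA) (cp_adj_lr.mpr rfl)
  · exact dist_eq_two_of hne' hna (cp_adj_lr.mpr rfl) (cp_adj_rr.mpr ⟨hne, hA⟩)

lemma rule1 {S : Set (V ⊕ V)} (hS : IsGeoConvex (compPrism T) S) {u v : V}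
    (hu : Sum.inl u ∈ S) (hv : Sum.inr v ∈ S) (hne : u ≠ v) (hadj : T.Adj u v) :
    Sum.inl v ∈ S :=
  convex_mid hS hu hv (cp_dist_lr hne) (cp_adj_ll.mpr hadj) (cp_adj_lr.mpr rfl)

lemma rule2 {S : Set (V ⊕ V)} (hS : IsGeoConvex (compPrism T) S) {u v : V}
    (hu : Sum.inl u ∈ S) (hv : Sum.inr v ∈ S) (hne : u ≠ v) (hna : ¬ T.Adj u v) :
    Sum.inr u ∈ S :=
  convex_mid hS hu hv (cp_dist_lr hne) (cp_adj_lr.mpr rfl) (cp_adj_rr.mpr ⟨hne, hna⟩)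

lemma DS.adj_rr_cm (h : DS T c d) {m : V} (hm : m ∈ Lv T d c) :
    (compPrism T).Adj (Sum.inr c) (Sum.inr m) := by
  rw [cp_adj_rr]
  exact ⟨fun he => h.c_not_mem_Ld (he ▸ hm), h.not_adj_c_of_Ld hm⟩

lemma DS.adj_rr_lm (h : DS T c d) {l m : V} (hl : l ∈ Lv T c d) (hm : m ∈ Lv T d c) :
    (compPrism T).Adj (Sum.inr l) (Sum.inr m) := by
  rw [cp_adj_rr]
  refine ⟨fun he => ?_, h.not_adj_leaves hl hm⟩
  rw [he] at hl
  have := h.Lc_Ld_disj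
  have : m ∈ Lv T c d ∩ Lv T d c := ⟨hl, hm⟩
  rw [h.Lc_Ld_disj] at this
  exact this

lemma DS.adj_rr_ld (h : DS T c d) {l : V} (hl : l ∈ Lv T c d) :
    (compPrism T).Adj (Sum.inr l) (Sum.inr d) := by
  rw [cp_adj_rr]
  exact ⟨fun he => h.d_not_mem_Lc (he ▸ hl), fun ha => h.not_adj_d_of_Lc hl ha.symm⟩

lemma DS.cp_dist_rr_cd (h : DS T c d) :
    (compPrism T).dist (Sum.inr c) (Sum.inr d) = 3 := by
  have hne : (Sum.inr c : V ⊕ V) ≠ Sum.inr d := by simp [h.c_ne_d]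
  have hna : ¬ (compPrism T).Adj (Sum.inr c) (Sum.inr d) := by
    rw [cp_adj_rr]
    push_neg
    exact fun _ => h.hcd
  have hno : ∀ w, ¬((compPrism T).Adj (Sum.inr c) w ∧ (compPrism T).Adj w (Sum.inr d)) := by
    rintro (z | z) ⟨h1, h2⟩
    · rw [cp_adj_rl] at h1
      rw [cp_adj_lr] at h2
      exact h.c_ne_d (h1.trans h2)
    · rw [cp_adj_rr] at h1 h2
      rcases h.classify z with rfl | rfl | hz | hz
      · exact h1.1 rfl
      · exact h2.1 rfl
      · exact h1.2 hz.1
      · exact h2.2 hz.1.symm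
  exact dist_eq_three_of hne hna hno (cp_adj_rl.mpr rfl) (cp_adj_ll.mpr h.hcd)
    (cp_adj_lr.mpr rfl)

lemma DS.L1 (h : DS T c d) {S : Set (V ⊕ V)} (hS : IsGeoConvex (compPrism T) S)
    (hc : Sum.inr c ∈ S) (hd : Sum.inr d ∈ S) : S = Set.univ := by
  have hdist := h.cp_dist_rr_cd
  obtain ⟨m0, hm0⟩ := h.symm.Lc_nonempty
  obtain ⟨l0, hl0⟩ := h.Lc_nonempty
  -- all inr leaves are in S
  have hrr : ∀ l ∈ Lv T c d, ∀ m ∈ Lv T d c, Sum.inr m ∈ S ∧ Sum.inr l ∈ S := by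
    intro l hl m hm
    refine convex_mid3 hS hc hd hdist (h.adj_rr_cm hm) ((h.adj_rr_lm hl hm).symm)
      (h.adj_rr_ld hl) ?_ ?_ ?_
    · simp only [ne_eq, Sum.inr.injEq]
      exact fun he => h.c_not_mem_Lc (he ▸ hl)
    · simp only [ne_eq, Sum.inr.injEq]
      exact h.c_ne_d
    · simp only [ne_eq, Sum.inr.injEq]
      exact fun he => h.d_not_mem_Ld (he ▸ hm)
  -- inl c and inl d are in S
  have hll : Sum.inl c ∈ S ∧ Sum.inl d ∈ S := by
    refine convex_mid3 hS hc hd hdist (cp_adj_rl.mpr rfl) (cp_adj_ll.mpr h.hcd)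
      (cp_adj_lr.mpr rfl) (by simp) (by simp [h.c_ne_d]) (by simp)
  rw [Set.eq_univ_iff_forall]
  rintro (z | z)
  · rcases h.classify z with rfl | rfl | hz | hz
    · exact hll.1
    · exact hll.2
    · exact rule1 hS hll.1 (hrr z hz m0 hm0).2 (fun he => h.c_not_mem_Lc (he ▸ hz)) hz.1
    · exact rule1 hS hll.2 (hrr l0 hl0 z hz).1 (fun he => h.d_not_mem_Ld (he ▸ hz)) hz.1
  · rcases h.classify z with rfl | rfl | hz | hz
    · exact hc
    · exact hd
    · exact (hrr z hz m0 hm0).2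
    · exact (hrr l0 hl0 z hz).1

lemma DS.cp_dist_ll_lm (h : DS T c d) {l m : V} (hl : l ∈ Lv T c d) (hm : m ∈ Lv T d c) :
    (compPrism T).dist (Sum.inl l) (Sum.inl m) = 3 := by
  have hlm : l ≠ m := by
    intro he
    have : m ∈ Lv T c d ∩ Lv T d c := ⟨he ▸ hl, hm⟩
    rw [h.Lc_Ld_disj] at this
    exact this
  have hne : (Sum.inl l : V ⊕ V) ≠ Sum.inl m := by simp [hlm]
  have hna : ¬ (compPrism T).Adj (Sum.inl l) (Sum.inl m) := by
    rw [cp_adj_ll]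
    exact h.not_adj_leaves hl hm
  have hno : ∀ w, ¬((compPrism T).Adj (Sum.inl l) w ∧ (compPrism T).Adj w (Sum.inl m)) := by
    rintro (z | z) ⟨h1, h2⟩
    · rw [cp_adj_ll] at h1 h2
      have hz := h.leaf_adj_c hl h1
      rw [hz] at h2
      exact h.not_adj_c_of_Ld hm h2
    · rw [cp_adj_lr] at h1
      rw [cp_adj_rl] at h2
      exact hlm (h1.trans h2)
  exact dist_eq_three_of hne hna hno (cp_adj_lr.mpr rfl)
    ((h.adj_rr_lm hl hm)) (cp_adj_rl.mpr rfl)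

lemma DS.L2 (h : DS T c d) {S : Set (V ⊕ V)} (hS : IsGeoConvex (compPrism T) S)
    {l m : V} (hl : l ∈ Lv T c d) (hm : m ∈ Lv T d c)
    (hls : Sum.inl l ∈ S) (hms : Sum.inl m ∈ S) : S = Set.univ := by
  have hlm : l ≠ m := by
    intro he
    have : m ∈ Lv T c d ∩ Lv T d c := ⟨he ▸ hl, hm⟩
    rw [h.Lc_Ld_disj] at this
    exact this
  have hdist := h.cp_dist_ll_lm hl hm
  -- geodesic through the inr side
  have g1 : Sum.inr l ∈ S ∧ Sum.inr m ∈ S := by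
    refine convex_mid3 hS hls hms hdist (cp_adj_lr.mpr rfl) (h.adj_rr_lm hl hm)
      (cp_adj_rl.mpr rfl) (by simp) (by simp [hlm]) (by simp)
  -- geodesic through the inl side
  have g2 : Sum.inl c ∈ S ∧ Sum.inl d ∈ S := by
    refine convex_mid3 hS hls hms hdist (cp_adj_ll.mpr hl.1.symm) (cp_adj_ll.mpr h.hcd)
      (cp_adj_ll.mpr hm.1) ?_ ?_ ?_
    · simp only [ne_eq, Sum.inl.injEq]
      exact hl.2
    · simp only [ne_eq, Sum.inl.injEq]
      exact hlm
    · simp only [ne_eq, Sum.inl.injEq]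
      exact fun he => h.c_not_mem_Ld (he ▸ hm)
  have hrc : Sum.inr c ∈ S :=
    rule2 hS g2.1 g1.2 (fun he => h.c_not_mem_Ld (he ▸ hm)) (h.not_adj_c_of_Ld hm)
  have hrd : Sum.inr d ∈ S :=
    rule2 hS g2.2 g1.1 (fun he => h.d_not_mem_Lc (he ▸ hl)) (h.not_adj_d_of_Lc hl)
  exact h.L1 hS hrc hrd

end Rules
section Upper

variable {V : Type*} [Fintype V] {T : SimpleGraph V} {c d : V}

lemma ncard_split (S : Set (V ⊕ V)) :
    S.ncard = (Sum.inl ⁻¹' S : Set V).ncard + (Sum.inr ⁻¹' S : Set V).ncard := by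
  classical
  have hS : S = (Sum.inl '' (Sum.inl ⁻¹' S)) ∪ (Sum.inr '' (Sum.inr ⁻¹' S)) := by
    ext z
    cases z with
    | inl x => simp
    | inr x => simp
  conv_lhs => rw [hS]
  rw [Set.ncard_union_eq ?disj (Set.toFinite _) (Set.toFinite _),
    Set.ncard_image_of_injective _ Sum.inl_injective,
    Set.ncard_image_of_injective _ Sum.inr_injective]
  case disj =>
    rw [Set.disjoint_left]
    rintro z ⟨x, _, rfl⟩ ⟨y, _, hy⟩
    exact Sum.inl_ne_inr hy.symm

lemma DS.upper (h : DS T c d) {S : Set (V ⊕ V)} (hS : IsGeoConvex (compPrism T) S)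
    (hproper : S ≠ Set.univ) (hAd : ∀ m ∈ Lv T d c, Sum.inl m ∉ S) :
    S.ncard ≤ Nat.card V + (Lv T c d).ncard := by
  classical
  set A : Set V := Sum.inl ⁻¹' S with hA
  set B : Set V := Sum.inr ⁻¹' S with hB
  have hsplit := ncard_split S
  rw [← hA, ← hB] at hsplit
  have hBcd : ¬(c ∈ B ∧ d ∈ B) := by
    rintro ⟨h1, h2⟩
    exact hproper (h.L1 hS h1 h2)
  have hq : 1 ≤ (Lv T d c).ncard := by
    rw [Nat.one_le_iff_ne_zero, ← Nat.pos_iff_ne_zero, Set.ncard_pos (Set.toFinite _)]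
    exact h.symm.Lc_nonempty
  have hcardV := h.card_V
  by_cases hdA : d ∈ A
  · -- case d ∈ A
    have hBLd : ∀ m ∈ Lv T d c, m ∉ B := by
      intro m hm hmB
      have hne : d ≠ m := fun he => h.d_not_mem_Ld (he ▸ hm)
      exact hAd m hm (rule1 hS hdA hmB hne hm.1)
    have hAsub : A ⊆ insert c (insert d (Lv T c d)) := by
      intro x hx
      rcases h.classify x with rfl | rfl | hxx | hxx
      · exact Set.mem_insert _ _
      · exact Set.mem_insert_of_mem _ (Set.mem_insert _ _)
      · exact Set.mem_insert_of_mem _ (Set.mem_insert_of_mem _ hxx)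
      · exact absurd hx (hAd x hxx)
    have hAcard : A.ncard ≤ (Lv T c d).ncard + 2 := by
      calc A.ncard ≤ (insert c (insert d (Lv T c d))).ncard :=
            Set.ncard_le_ncard hAsub (Set.toFinite _)
        _ ≤ (insert d (Lv T c d)).ncard + 1 := Set.ncard_insert_le _ _
        _ ≤ ((Lv T c d).ncard + 1) + 1 := by
            have := Set.ncard_insert_le d (Lv T c d)
            omega
        _ = (Lv T c d).ncard + 2 := by omega
    have hBcard : B.ncard ≤ (Lv T c d).ncard + 1 := by
      by_cases hcB : c ∈ B
      · have hdB : d ∉ B := fun hdB => hBcd ⟨hcB, hdB⟩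
        have hBsub : B ⊆ insert c (Lv T c d) := by
          intro x hx
          rcases h.classify x with rfl | rfl | hxx | hxx
          · exact Set.mem_insert _ _
          · exact absurd hx hdB
          · exact Set.mem_insert_of_mem _ hxx
          · exact absurd hx (hBLd x hxx)
        calc B.ncard ≤ (insert c (Lv T c d)).ncard :=
              Set.ncard_le_ncard hBsub (Set.toFinite _)
          _ ≤ (Lv T c d).ncard + 1 := Set.ncard_insert_le _ _
      · have hBsub : B ⊆ insert d (Lv T c d) := by
          intro x hx
          rcases h.classify x with rfl | rfl | hxx | hxx
          · exact absurd hx hcB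
          · exact Set.mem_insert _ _
          · exact Set.mem_insert_of_mem _ hxx
          · exact absurd hx (hBLd x hxx)
        calc B.ncard ≤ (insert d (Lv T c d)).ncard :=
              Set.ncard_le_ncard hBsub (Set.toFinite _)
          _ ≤ (Lv T c d).ncard + 1 := Set.ncard_insert_le _ _
    omega
  · -- case d ∉ A
    have hAsub : A ⊆ insert c (Lv T c d) := by
      intro x hx
      rcases h.classify x with rfl | rfl | hxx | hxx
      · exact Set.mem_insert _ _
      · exact absurd hx hdA
      · exact Set.mem_insert_of_mem _ hxx
      · exact absurd hx (hAd x hxx)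
    have hAcard : A.ncard ≤ (Lv T c d).ncard + 1 := by
      calc A.ncard ≤ (insert c (Lv T c d)).ncard :=
            Set.ncard_le_ncard hAsub (Set.toFinite _)
        _ ≤ (Lv T c d).ncard + 1 := Set.ncard_insert_le _ _
    have hBne : B ≠ Set.univ := by
      intro hBu
      exact hBcd ⟨by rw [hBu]; trivial, by rw [hBu]; trivial⟩
    have hBcard : B.ncard < Nat.card V := by
      have hss : B ⊂ Set.univ := (Set.ssubset_univ_iff).mpr hBne
      have := Set.ncard_lt_ncard hss (Set.toFinite _)
      rwa [Set.ncard_univ] at this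
    omega

end Upper
section Lower

variable {V : Type*} [Fintype V] {T : SimpleGraph V} {c d : V}

lemma DS.cp_dist_ll_leaves (h : DS T c d) {l l' : V} (hl : l ∈ Lv T c d)
    (hl' : l' ∈ Lv T c d) (hne : l ≠ l') :
    (compPrism T).dist (Sum.inl l) (Sum.inl l') = 2 := by
  have hne' : (Sum.inl l : V ⊕ V) ≠ Sum.inl l' := by simp [hne]
  have hna : ¬ (compPrism T).Adj (Sum.inl l) (Sum.inl l') := by
    rw [cp_adj_ll]; exact h.not_adj_leaves_cc hl hl' hne
  exact dist_eq_two_of hne' hna (cp_adj_ll.mpr hl.1.symm) (cp_adj_ll.mpr hl'.1)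

lemma DS.cp_dist_rr_two_c (h : DS T c d) {y : V} (hy : y ∈ Lv T c d) :
    (compPrism T).dist (Sum.inr c) (Sum.inr y) = 2 := by
  obtain ⟨m0, hm0⟩ := h.symm.Lc_nonempty
  have hne' : (Sum.inr c : V ⊕ V) ≠ Sum.inr y := by simp [hy.1.ne]
  have hna : ¬ (compPrism T).Adj (Sum.inr c) (Sum.inr y) := by
    rw [cp_adj_rr]
    push_neg
    exact fun _ => hy.1
  exact dist_eq_two_of hne' hna (h.adj_rr_cm hm0) ((h.adj_rr_lm hy hm0).symm)

lemma DS.cp_dist_rr_two (h : DS T c d) {x y : V} (hx : x ≠ d) (hy : y ≠ d)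
    (hadj : T.Adj x y) : (compPrism T).dist (Sum.inr x) (Sum.inr y) = 2 := by
  rcases h.classify x with hxc | hxd | hxx | hxx
  · rw [hxc]
    exact h.cp_dist_rr_two_c ⟨hxc ▸ hadj, hy⟩
  · exact absurd hxd hx
  · have hyc : y = c := h.leaf_adj_c hxx hadj
    rw [hyc, SimpleGraph.dist_comm]
    exact h.cp_dist_rr_two_c hxx
  · exact absurd (h.leaf_adj_d hxx hadj) hy

/-- The extremal convex set. -/
def S0 (T : SimpleGraph V) (c d : V) : Set (V ⊕ V) :=
  (Sum.inl '' (insert c (Lv T c d))) ∪ (Sum.inr '' ({d}ᶜ))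

lemma S0_mem_inl {x : V} : Sum.inl x ∈ S0 T c d ↔ x ∈ insert c (Lv T c d) := by
  simp [S0]

lemma S0_mem_inr {x : V} : Sum.inr x ∈ S0 T c d ↔ x ≠ d := by
  simp [S0]

/-- case: both endpoints on the `inl` side. -/
lemma DS.S0_case_ll (h : DS T c d) {x y : V} (hx : x ∈ insert c (Lv T c d))
    (hy : y ∈ insert c (Lv T c d)) (hne : x ≠ y) (w : V ⊕ V)
    (hw : inInterval (compPrism T) (Sum.inl x) (Sum.inl y) w) : w ∈ S0 T c d := by
  by_cases hadj : T.Adj x y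
  · rcases interval_dist1 (cp_adj_ll.mpr hadj) hw with rfl | rfl
    · exact S0_mem_inl.mpr hx
    · exact S0_mem_inl.mpr hy
  · -- both are leaves of c
    have hxLc : x ∈ Lv T c d := by
      rcases Set.mem_insert_iff.mp hx with rfl | hxx
      · rcases Set.mem_insert_iff.mp hy with rfl | hyy
        · exact absurd rfl hne
        · exact absurd hyy.1 hadj
      · exact hxx
    have hyLc : y ∈ Lv T c d := by
      rcases Set.mem_insert_iff.mp hy with rfl | hyy
      · exact absurd hxLc.1.symm hadj
      · exact hyy
    rcases interval_dist2 (h.cp_dist_ll_leaves hxLc hyLc hne) hw with rfl | rfl | ⟨h1, h2⟩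
    · exact S0_mem_inl.mpr hx
    · exact S0_mem_inl.mpr hy
    · cases w with
      | inl z =>
        rw [cp_adj_ll] at h1
        have : z = c := h.leaf_adj_c hxLc h1
        subst this
        exact S0_mem_inl.mpr (Set.mem_insert _ _)
      | inr z =>
        rw [cp_adj_lr] at h1
        rw [cp_adj_rl] at h2
        exact absurd (h1.trans h2) hne

/-- case: `inl` then `inr`. -/
lemma DS.S0_case_lr (h : DS T c d) {x y : V} (hx : x ∈ insert c (Lv T c d))
    (hy : y ≠ d) (w : V ⊕ V)
    (hw : inInterval (compPrism T) (Sum.inl x) (Sum.inr y) w) : w ∈ S0 T c d := by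
  by_cases hxy : x = y
  · subst hxy
    rcases interval_dist1 (cp_adj_lr.mpr rfl) hw with rfl | rfl
    · exact S0_mem_inl.mpr hx
    · exact S0_mem_inr.mpr hy
  · rcases interval_dist2 (cp_dist_lr hxy) hw with rfl | rfl | ⟨h1, h2⟩
    · exact S0_mem_inl.mpr hx
    · exact S0_mem_inr.mpr hy
    · cases w with
      | inl z =>
        rw [cp_adj_ll] at h1
        rw [cp_adj_lr] at h2
        rcases Set.mem_insert_iff.mp hx with hxc | hxx
        · -- x = c, y neighbor of c, y ≠ d so y ∈ Lc
          exact S0_mem_inl.mpr (Set.mem_insert_of_mem _ ⟨hxc ▸ h1, by rw [h2]; exact hy⟩)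
        · -- x ∈ Lc, so z = c
          have hzc : z = c := h.leaf_adj_c hxx h1
          rw [hzc]
          exact S0_mem_inl.mpr (Set.mem_insert _ _)
      | inr z =>
        rw [cp_adj_lr] at h1
        have hxd : x ≠ d := by
          rcases Set.mem_insert_iff.mp hx with hxc | hxx
          · rw [hxc]; exact h.c_ne_d
          · exact hxx.2
        rw [← h1]
        exact S0_mem_inr.mpr hxd

/-- case: both on the `inr` side. -/
lemma DS.S0_case_rr (h : DS T c d) {x y : V} (hx : x ≠ d) (hy : y ≠ d) (hne : x ≠ y)
    (w : V ⊕ V) (hw : inInterval (compPrism T) (Sum.inr x) (Sum.inr y) w) :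
    w ∈ S0 T c d := by
  by_cases hadj : T.Adj x y
  · -- distance two
    have hcin : x = c ∨ y = c := by
      rcases h.classify x with rfl | rfl | hxx | hxx
      · exact Or.inl rfl
      · exact absurd rfl hx
      · exact Or.inr (h.leaf_adj_c hxx hadj)
      · exact absurd (h.leaf_adj_d hxx hadj) hy
    rcases interval_dist2 (h.cp_dist_rr_two hx hy hadj) hw with rfl | rfl | ⟨h1, h2⟩
    · exact S0_mem_inr.mpr hx
    · exact S0_mem_inr.mpr hy
    · cases w with
      | inl z =>
        rw [cp_adj_rl] at h1
        rw [cp_adj_lr] at h2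
        exact absurd (h1.trans h2) hne
      | inr z =>
        rw [cp_adj_rr] at h1 h2
        refine S0_mem_inr.mpr ?_
        rintro rfl
        rcases hcin with rfl | rfl
        · exact h1.2 h.hcd
        · exact h2.2 h.hcd.symm
  · -- adjacent in the prism
    rcases interval_dist1 (cp_adj_rr.mpr ⟨hne, hadj⟩) hw with rfl | rfl
    · exact S0_mem_inr.mpr hx
    · exact S0_mem_inr.mpr hy

lemma DS.S0_convex (h : DS T c d) : IsGeoConvex (compPrism T) (S0 T c d) := by
  intro u hu v hv w hw
  by_cases huv : u = v
  · subst huv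
    rw [interval_self hw]
    exact hu
  cases u with
  | inl x =>
    cases v with
    | inl y =>
      exact h.S0_case_ll (S0_mem_inl.mp hu) (S0_mem_inl.mp hv)
        (fun he => huv (by rw [he])) w hw
    | inr y =>
      exact h.S0_case_lr (S0_mem_inl.mp hu) (S0_mem_inr.mp hv) w hw
  | inr x =>
    cases v with
    | inl y =>
      exact h.S0_case_lr (S0_mem_inl.mp hv) (S0_mem_inr.mp hu) w (inInterval_symm hw)
    | inr y =>
      exact h.S0_case_rr (S0_mem_inr.mp hu) (S0_mem_inr.mp hv)
        (fun he => huv (by rw [he])) w hw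

lemma DS.S0_proper (h : DS T c d) : S0 T c d ≠ Set.univ := by
  intro hu
  have : Sum.inl d ∈ S0 T c d := by rw [hu]; trivial
  rw [S0_mem_inl] at this
  rcases Set.mem_insert_iff.mp this with he | hd
  · exact h.c_ne_d he.symm
  · exact h.d_not_mem_Lc hd

lemma DS.S0_ncard (h : DS T c d) :
    (S0 T c d).ncard = Nat.card V + (Lv T c d).ncard := by
  classical
  have hdisj : Disjoint (Sum.inl '' (insert c (Lv T c d)) : Set (V ⊕ V))
      (Sum.inr '' ({d}ᶜ)) := by
    rw [Set.disjoint_left]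
    rintro z ⟨a, _, rfl⟩ ⟨b, _, hb⟩
    exact Sum.inl_ne_inr hb.symm
  have h1 : (Sum.inl '' (insert c (Lv T c d)) : Set (V ⊕ V)).ncard
      = (Lv T c d).ncard + 1 := by
    rw [Set.ncard_image_of_injective _ Sum.inl_injective,
      Set.ncard_insert_of_notMem h.c_not_mem_Lc (Set.toFinite _)]
  have h2 : (Sum.inr '' ({d}ᶜ) : Set (V ⊕ V)).ncard = Nat.card V - 1 := by
    rw [Set.ncard_image_of_injective _ Sum.inr_injective]
    have := Set.ncard_add_ncard_compl ({d} : Set V)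
    rw [Set.ncard_singleton] at this
    omega
  have hn : 2 ≤ Nat.card V := by
    have := h.card_V
    omega
  rw [S0, Set.ncard_union_eq hdisj (Set.toFinite _) (Set.toFinite _), h1, h2]
  omega

end Lower
section Main

variable {V : Type*} [Fintype V] {T : SimpleGraph V} {c d : V}

lemma DS.main (h : DS T c d) (hpq : (Lv T d c).ncard ≤ (Lv T c d).ncard) :
    convexityNumber (compPrism T) = Nat.card V + maxDeg T - 1 := by
  classical
  set M := {n | ∃ S : Set (V ⊕ V), IsGeoConvex (compPrism T) S ∧ S ≠ Set.univ ∧ S.ncard = n}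
    with hM
  have hCN : convexityNumber (compPrism T) = sSup M := rfl
  set N := Nat.card V + (Lv T c d).ncard with hN
  have hub : ∀ k ∈ M, k ≤ N := by
    rintro k ⟨S, hS, hproper, rfl⟩
    by_cases hLd : ∃ m ∈ Lv T d c, Sum.inl m ∈ S
    · obtain ⟨m, hm, hmS⟩ := hLd
      by_cases hLc : ∃ l ∈ Lv T c d, Sum.inl l ∈ S
      · obtain ⟨l, hl, hlS⟩ := hLc
        exact absurd (h.L2 hS hl hm hlS hmS) hproper
      · push_neg at hLc
        have := h.symm.upper hS hproper hLc
        omega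
    · push_neg at hLd
      exact h.upper hS hproper hLd
  have hmem : N ∈ M := ⟨S0 T c d, h.S0_convex, h.S0_proper, h.S0_ncard⟩
  have hsup : sSup M = N :=
    le_antisymm (csSup_le ⟨N, hmem⟩ hub) (le_csSup ⟨N, hub⟩ hmem)
  have hmax : maxDeg T = (Lv T c d).ncard + 1 := by
    rw [h.maxDeg_eq, max_eq_left hpq]
  rw [hCN, hsup, hmax, hN]
  omega

end Main

theorem stmt12 {V : Type*} [Fintype V] (T : SimpleGraph V) (hT : T.IsTree)
    (hd : graphDiam T = 3) :
    convexityNumber (compPrism T) = Nat.card V + maxDeg T - 1 := by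
  obtain ⟨c, d, hds⟩ := exists_DS hT hd
  rcases le_total ((Lv T d c).ncard) ((Lv T c d).ncard) with hle | hle
  · exact hds.main hle
  · exact hds.symm.main hle
end

section
/- If T is a tree with diameter 2 (a star with at least 3 vertices), then the convexity number of the complementary prism TT̄ equals 2·n(T) − 1. -/
open SimpleGraph

section Aux

variable {V : Type*}

/-- In a tree, any path realizes the distance. -/
lemma tree_dist_eq {T : SimpleGraph V} (hT : T.IsTree) {u v : V}
    (p : T.Walk u v) (hp : p.IsPath) : T.dist u v = p.length := by
  obtain ⟨q, hq, hql⟩ := (hT.isConnected u v).exists_path_of_dist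
  have : q = p := ((hT.existsUnique_path u v).unique hq hp)
  rw [← hql, this]

/-- A vertex with a unique neighbour cannot be internal on a path. -/
lemma no_internal {H : SimpleGraph V} {x m : V} (hx : ∀ y, H.Adj x y → y = m) :
    ∀ {u v : V} (p : H.Walk u v), p.IsPath → x ∈ p.support → x = u ∨ x = v := by
  intro u v p
  induction p with
  | nil => intro _ h; simp only [SimpleGraph.Walk.support_nil, List.mem_singleton] at h
           exact Or.inl h
  | @cons u b v h q ih =>
    intro hp hs
    rw [SimpleGraph.Walk.support_cons, List.mem_cons] at hs
    rcases hs with rfl | hs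
    · exact Or.inl rfl
    rcases ih hp.of_cons hs with rfl | rfl
    · -- x = b
      have hum : u = m := hx u h.symm
      cases q with
      | nil => exact Or.inr rfl
      | @cons _ d _ h2 q2 =>
        have hdm : d = m := hx d h2
        exfalso
        have hu : u ∉ (SimpleGraph.Walk.cons h2 q2).support :=
          (SimpleGraph.Walk.cons_isPath_iff _ _ |>.1 hp).2
        apply hu
        rw [SimpleGraph.Walk.support_cons]
        exact List.mem_cons_of_mem _ (hum ▸ hdm ▸ q2.start_mem_support)
    · exact Or.inr rfl

/-- A tree of diameter 2 has a dominating centre. -/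
lemma star_center [Fintype V] {T : SimpleGraph V} (hT : T.IsTree)
    (hd : graphDiam T = 2) : ∃ c : V, ∀ w, w ≠ c → T.Adj c w := by
  classical
  have hconn := hT.isConnected
  have hbdd : BddAbove {d | ∃ u v : V, T.dist u v = d} := by
    refine ⟨Fintype.card V, ?_⟩
    rintro d ⟨u, v, rfl⟩
    obtain ⟨p, hp, hpl⟩ := (hconn u v).exists_path_of_dist
    rw [← hpl]
    exact le_of_lt hp.length_lt
  have hle : ∀ u v : V, T.dist u v ≤ 2 := by
    intro u v
    rw [← hd]
    exact le_csSup hbdd ⟨u, v, rfl⟩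
  have hne : Set.Nonempty {d | ∃ u v : V, T.dist u v = d} := by
    obtain ⟨a⟩ := hconn.nonempty
    exact ⟨T.dist a a, a, a, rfl⟩
  have h2 : (2 : ℕ) ∈ {d | ∃ u v : V, T.dist u v = d} := by
    rw [← hd]; exact Nat.sSup_mem hne hbdd
  obtain ⟨u, v, huv⟩ := h2
  obtain ⟨p, hp, hpl⟩ := (hconn u v).exists_path_of_dist
  rw [huv] at hpl
  -- p is a path of length 2: u - c - v
  cases p with
  | nil => simp at hpl
  | @cons _ c _ h1 q =>
    cases q with
    | nil => simp at hpl
    | @cons _ e _ h2' q2 =>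
      cases q2 with
      | cons h3 q3 => simp [SimpleGraph.Walk.length_cons] at hpl
      | nil =>
        -- h1 : T.Adj u c, h2' : T.Adj c v
        refine ⟨c, ?_⟩
        intro w hw
        have hcw := hle c w
        have huv' : u ≠ v := by
          intro h; rw [h, SimpleGraph.dist_self] at huv; omega
        interval_cases hdist : T.dist c w
        · exact absurd (hconn.dist_eq_zero_iff.mp hdist).symm hw
        · exact SimpleGraph.dist_eq_one_iff_adj.mp hdist
        · -- derive a contradiction : there is a path of length 3
          exfalso
          obtain ⟨r, hr, hrl⟩ := (hconn c w).exists_path_of_dist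
          rw [hdist] at hrl
          cases r with
          | nil => simp at hrl
          | @cons _ xx _ g1 r1 =>
            cases r1 with
            | nil => simp at hrl
            | @cons _ yy _ g2 r2 =>
              cases r2 with
              | cons g3 r3 => simp [SimpleGraph.Walk.length_cons] at hrl
              | nil =>
                -- g1 : T.Adj c xx, g2 : T.Adj xx w
                have hcw' : c ≠ w := by
                  intro h; rw [h, SimpleGraph.dist_self] at hdist; omega
                by_cases hxu : xx = u
                · subst hxu
                  -- walk v - c - xx(=u) - w
                  have hvw : v ≠ w := by
                    intro h
                    rw [← h, SimpleGraph.dist_eq_one_iff_adj.mpr h2'] at hdist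
                    omega
                  have hW : (SimpleGraph.Walk.cons h2'.symm
                      (SimpleGraph.Walk.cons g1 (SimpleGraph.Walk.cons g2
                        SimpleGraph.Walk.nil))).IsPath := by
                    simp only [SimpleGraph.Walk.isPath_def,
                      SimpleGraph.Walk.support_cons, SimpleGraph.Walk.support_nil]
                    simp [h2'.ne', h1.ne', g2.ne, huv'.symm, hvw, hcw', g1.ne]
                  have h3' := tree_dist_eq hT _ hW
                  simp only [SimpleGraph.Walk.length_cons,
                    SimpleGraph.Walk.length_nil] at h3'
                  have := hle v w
                  omega
                · -- walk u - c - xx - w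
                  have huw : u ≠ w := by
                    intro h
                    rw [← h, SimpleGraph.dist_eq_one_iff_adj.mpr h1.symm] at hdist
                    omega
                  have hW : (SimpleGraph.Walk.cons h1
                      (SimpleGraph.Walk.cons g1 (SimpleGraph.Walk.cons g2
                        SimpleGraph.Walk.nil))).IsPath := by
                    simp only [SimpleGraph.Walk.isPath_def,
                      SimpleGraph.Walk.support_cons, SimpleGraph.Walk.support_nil]
                    simp [h1.ne, g1.ne, g2.ne, huw, hcw', Ne.symm hxu]
                  have h3' := tree_dist_eq hT _ hW
                  simp only [SimpleGraph.Walk.length_cons,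
                    SimpleGraph.Walk.length_nil] at h3'
                  have := hle u w
                  omega

end Aux

theorem stmt13 {V : Type*} [Fintype V] (T : SimpleGraph V) (hT : T.IsTree)
    (hd : graphDiam T = 2) :
    convexityNumber (compPrism T) = 2 * Nat.card V - 1 := by
  classical
  obtain ⟨c, hc⟩ := star_center hT hd
  set H := compPrism T with hH
  set x : V ⊕ V := Sum.inr c with hxdef
  have hx : ∀ y, H.Adj x y → y = Sum.inl c := by
    rintro (b | b) h
    · have hb : c = b := h
      rw [hb]
    · have hb : Tᶜ.Adj c b := h
      rw [SimpleGraph.compl_adj] at hb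
      exact absurd (hc b (Ne.symm hb.1)) hb.2
  set S : Set (V ⊕ V) := {x}ᶜ with hSdef
  have hxS : x ∉ S := by simp [hSdef]
  have hconv : IsGeoConvex H S := by
    rintro u hu v hv w ⟨p, hp, -, hws⟩
    by_cases hwx : w = x
    · subst hwx
      rcases no_internal hx p hp hws with rfl | rfl
      · exact absurd hu hxS
      · exact absurd hv hxS
    · simpa [hSdef] using hwx
  have hSne : S ≠ Set.univ := by
    intro h
    exact hxS (h ▸ Set.mem_univ x)
  have hcardU : Nat.card (V ⊕ V) = 2 * Nat.card V := by
    rw [Nat.card_sum]; ring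
  have hScard : S.ncard = 2 * Nat.card V - 1 := by
    have h1 : ({x} : Set (V ⊕ V)).ncard = 1 := Set.ncard_singleton x
    have := Set.ncard_add_ncard_compl ({x} : Set (V ⊕ V))
    rw [h1, hcardU] at this
    rw [hSdef]
    omega
  have hub : ∀ k ∈ {n | ∃ S : Set (V ⊕ V), IsGeoConvex H S ∧ S ≠ Set.univ ∧ S.ncard = n},
      k ≤ 2 * Nat.card V - 1 := by
    rintro k ⟨S', -, hne', rfl⟩
    have hss : S' ⊂ Set.univ := Set.ssubset_univ_iff.mpr hne'
    have := Set.ncard_lt_ncard hss (Set.finite_univ)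
    rw [Set.ncard_univ, hcardU] at this
    omega
  have hmem : (2 * Nat.card V - 1) ∈
      {n | ∃ S : Set (V ⊕ V), IsGeoConvex H S ∧ S ≠ Set.univ ∧ S.ncard = n} :=
    ⟨S, hconv, hSne, hScard⟩
  exact le_antisymm (csSup_le ⟨_, hmem⟩ hub) (le_csSup ⟨_, hub⟩ hmem)
end

section
/- Let T be a tree with diameter at least 5, and let S be a proper convex set of the complementary prism TT̄ with M = S ∩ V(T). If M contains two vertices u, v with d_T(u,v) > 3, then every pair of vertices x, y ∈ M satisfies d_T(x,y) > 3. -/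
open SimpleGraph

private lemma walk_len1 {W : Type*} {H : SimpleGraph W} {A B : W} (p : H.Walk A B)
    (h : p.length = 1) : H.Adj A B := by
  cases p with
  | nil => simp at h
  | cons hadj q =>
    cases q with
    | nil => exact hadj
    | cons h2 q2 => simp [SimpleGraph.Walk.length_cons] at h

private lemma walk_len2 {W : Type*} {H : SimpleGraph W} {A B : W} (p : H.Walk A B)
    (h : p.length = 2) : ∃ m, H.Adj A m ∧ H.Adj m B := by
  cases p with
  | nil => simp at h
  | cons hadj q =>
    refine ⟨_, hadj, walk_len1 q ?_⟩
    simpa using h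

private lemma walk_len3 {W : Type*} {H : SimpleGraph W} {A B : W} (p : H.Walk A B)
    (h : p.length = 3) : ∃ m n, H.Adj A m ∧ H.Adj m n ∧ H.Adj n B := by
  cases p with
  | nil => simp at h
  | cons hadj q =>
    obtain ⟨n, h1, h2⟩ := walk_len2 q (by simpa using h)
    exact ⟨_, n, hadj, h1, h2⟩

private lemma mem_mid2 {W : Type*} {H : SimpleGraph W} {S : Set W} (hS : IsGeoConvex H S)
    {A B w : W} (hA : A ∈ S) (hB : B ∈ S) (h1 : H.Adj A w) (h2 : H.Adj w B)
    (hnadj : ¬ H.Adj A B) (hne : A ≠ B) : w ∈ S := by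
  have hle : H.dist A B ≤ 2 := by
    simpa using SimpleGraph.dist_le (Walk.cons h1 (Walk.cons h2 Walk.nil))
  have h0 : H.dist A B ≠ 0 := by
    rw [SimpleGraph.dist_ne_zero_iff_ne_and_reachable]
    exact ⟨hne, ⟨Walk.cons h1 (Walk.cons h2 Walk.nil)⟩⟩
  have h1' : H.dist A B ≠ 1 := fun hd => hnadj (SimpleGraph.dist_eq_one_iff_adj.mp hd)
  have hd : H.dist A B = 2 := by omega
  refine hS A hA B hB w ⟨Walk.cons h1 (Walk.cons h2 Walk.nil), ?_, by simp [hd], by simp⟩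
  rw [SimpleGraph.Walk.isPath_def]
  simp [h1.ne, h2.ne, hne]

private lemma mem_mid3 {W : Type*} {H : SimpleGraph W} {S : Set W} (hS : IsGeoConvex H S)
    {A B w1 w2 : W} (hA : A ∈ S) (hB : B ∈ S) (h1 : H.Adj A w1) (h2 : H.Adj w1 w2)
    (h3 : H.Adj w2 B) (hAw2 : A ≠ w2) (hw1B : w1 ≠ B) (hAB : A ≠ B)
    (hdist : H.dist A B = 3) : w1 ∈ S ∧ w2 ∈ S := by
  have hp : (Walk.cons h1 (Walk.cons h2 (Walk.cons h3 Walk.nil)) : H.Walk A B).IsPath := by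
    rw [SimpleGraph.Walk.isPath_def]
    simp [h1.ne, h2.ne, h3.ne, hAw2, hw1B, hAB]
  constructor
  · exact hS A hA B hB w1 ⟨_, hp, by simp [hdist], by simp⟩
  · exact hS A hA B hB w2 ⟨_, hp, by simp [hdist], by simp⟩

private lemma prism_dist3 {V : Type*} (T : SimpleGraph V) {x y : V} (h3 : 3 ≤ T.dist x y) :
    (compPrism T).dist (Sum.inl x) (Sum.inl y) = 3 := by
  have hne : x ≠ y := by rintro rfl; simp [SimpleGraph.dist_self] at h3
  have hnadj : ¬ T.Adj x y := fun h => by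
    have := SimpleGraph.dist_eq_one_iff_adj.mpr h; omega
  have hcadj : Tᶜ.Adj x y := ⟨hne, hnadj⟩
  have wadj1 : (compPrism T).Adj (Sum.inl x) (Sum.inr x) := rfl
  have wadj2 : (compPrism T).Adj (Sum.inr x) (Sum.inr y) := hcadj
  have wadj3 : (compPrism T).Adj (Sum.inr y) (Sum.inl y) := rfl
  have hle : (compPrism T).dist (Sum.inl x) (Sum.inl y) ≤ 3 := by
    simpa using SimpleGraph.dist_le (Walk.cons wadj1 (Walk.cons wadj2 (Walk.cons wadj3 Walk.nil)))
  have h0 : (compPrism T).dist (Sum.inl x) (Sum.inl y) ≠ 0 := by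
    rw [SimpleGraph.dist_ne_zero_iff_ne_and_reachable]
    exact ⟨by simp [hne], ⟨Walk.cons wadj1 (Walk.cons wadj2 (Walk.cons wadj3 Walk.nil))⟩⟩
  have h1 : (compPrism T).dist (Sum.inl x) (Sum.inl y) ≠ 1 := fun hd => by
    have : (compPrism T).Adj (Sum.inl x) (Sum.inl y) := SimpleGraph.dist_eq_one_iff_adj.mp hd
    have hxy : T.Adj x y := this
    exact hnadj hxy
  have h2 : (compPrism T).dist (Sum.inl x) (Sum.inl y) ≠ 2 := fun hd => by
    obtain ⟨p, hp⟩ := SimpleGraph.exists_walk_of_dist_ne_zero h0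
    rw [hd] at hp
    obtain ⟨m, hm1, hm2⟩ := walk_len2 p hp
    rcases m with c | c
    · have ha1 : T.Adj x c := hm1
      have ha2 : T.Adj c y := hm2
      have : T.dist x y ≤ 2 := by
        simpa using SimpleGraph.dist_le (Walk.cons ha1 (Walk.cons ha2 Walk.nil))
      omega
    · have e1 : x = c := hm1
      have e2 : c = y := hm2
      exact hne (e1.trans e2)
  omega

theorem stmt15 {V : Type*} [Fintype V] (T : SimpleGraph V) (hT : T.IsTree)
    (hd : 5 ≤ graphDiam T) (S : Set (V ⊕ V))
    (hS : IsGeoConvex (compPrism T) S) (hSp : S ≠ Set.univ)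
    (u v : V) (hu : Sum.inl u ∈ S) (hv : Sum.inl v ∈ S) (huv : 3 < T.dist u v) :
    ∀ x y : V, Sum.inl x ∈ S → Sum.inl y ∈ S → x ≠ y → 3 < T.dist x y := by
  intro x y hx hy hxy
  by_contra hgt
  push_neg at hgt
  have conn := hT.isConnected
  have reach : ∀ a b : V, T.Reachable a b := fun a b => conn a b
  have tri : ∀ a b c : V, T.dist a c ≤ T.dist a b + T.dist b c := fun a b c => conn.dist_triangle
  have adjd : ∀ {a b : V}, T.Adj a b → T.dist a b = 1 := fun h =>
    SimpleGraph.dist_eq_one_iff_adj.mpr h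
  have nadj : ∀ {a b : V}, 2 ≤ T.dist a b → ¬T.Adj a b ∧ a ≠ b := by
    intro a b h
    constructor
    · intro hadj; have := adjd hadj; omega
    · rintro rfl; simp [SimpleGraph.dist_self] at h
  -- rule: common inl-neighbor of two inl's of S at T-distance 2
  have midM : ∀ a b m : V, Sum.inl a ∈ S → Sum.inl b ∈ S → T.Adj a m → T.Adj m b →
      ¬T.Adj a b → a ≠ b → Sum.inl m ∈ S := by
    intro a b m ha hb h1 h2 hna hne
    exact mem_mid2 hS ha hb (show T.Adj a m from h1) (show T.Adj m b from h2)
      (fun h => hna h) (fun h => hne (Sum.inl.inj h))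
  -- rule P5
  have P5 : ∀ c m : V, Sum.inr c ∈ S → Sum.inl m ∈ S → ¬T.Adj c m → c ≠ m → Sum.inr m ∈ S := by
    intro c m hc hm hna hne
    refine mem_mid2 hS hc hm ?_ ?_ ?_ ?_
    · exact (⟨hne, hna⟩ : Tᶜ.Adj c m)
    · exact (rfl : m = m)
    · intro h; exact hne (h : c = m)
    · simp
  -- rule P6
  have P6 : ∀ c d w : V, Sum.inr c ∈ S → Sum.inr d ∈ S → T.Adj c d → ¬T.Adj w c → ¬T.Adj w d →
      w ≠ c → w ≠ d → Sum.inr w ∈ S := by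
    intro c d w hc hd hcd h1 h2 e1 e2
    refine mem_mid2 hS hc hd ?_ ?_ ?_ ?_
    · exact (⟨fun h => e1 h.symm, fun h => h1 h.symm⟩ : Tᶜ.Adj c w)
    · exact (⟨e2, h2⟩ : Tᶜ.Adj w d)
    · intro h; exact (h : Tᶜ.Adj c d).2 hcd
    · simpa using hcd.ne
  -- rule P4
  have P4 : ∀ c m : V, Sum.inr c ∈ S → Sum.inl m ∈ S → T.Adj c m → Sum.inl c ∈ S := by
    intro c m hc hm hadj
    refine mem_mid2 hS hc hm (show c = c from rfl) (show T.Adj c m from hadj) ?_ (by simp)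
    intro h; exact hadj.ne (h : c = m)
  -- rule P1 : far inl pair puts the inr copies in S
  have P1 : ∀ a b : V, Sum.inl a ∈ S → Sum.inl b ∈ S → 3 ≤ T.dist a b →
      Sum.inr a ∈ S ∧ Sum.inr b ∈ S := by
    intro a b ha hb h3
    obtain ⟨hna, hne⟩ := nadj (by omega : 2 ≤ T.dist a b)
    exact mem_mid3 hS ha hb (show a = a from rfl) (show Tᶜ.Adj a b from ⟨hne, hna⟩)
      (show b = b from rfl) (by simp) (by simp) (fun h => hne (Sum.inl.inj h))
      (prism_dist3 T h3)
  -- rule P3 : fill a T-geodesic of length 3 between inl's of S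
  have P3 : ∀ a b q1 q2 : V, Sum.inl a ∈ S → Sum.inl b ∈ S → T.dist a b = 3 →
      T.Adj a q1 → T.Adj q1 q2 → T.Adj q2 b → Sum.inl q1 ∈ S ∧ Sum.inl q2 ∈ S := by
    intro a b q1 q2 ha hb hdd h1 h2 h3
    have haq2 : a ≠ q2 := by rintro rfl; have := adjd h3; omega
    have hq1b : q1 ≠ b := by rintro rfl; have := adjd h1; omega
    have hab : a ≠ b := by rintro rfl; simp [SimpleGraph.dist_self] at hdd
    exact mem_mid3 hS ha hb (show T.Adj a q1 from h1) (show T.Adj q1 q2 from h2)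
      (show T.Adj q2 b from h3) (fun h => haq2 (Sum.inl.inj h)) (fun h => hq1b (Sum.inl.inj h))
      (fun h => hab (Sum.inl.inj h)) (prism_dist3 T (le_of_eq hdd.symm))
  -- geodesic decompositions in T
  have dec2 : ∀ a b : V, T.dist a b = 2 → ∃ m, T.Adj a m ∧ T.Adj m b := by
    intro a b hdd
    obtain ⟨p, hp⟩ := (reach a b).exists_walk_length_eq_dist
    exact walk_len2 p (by omega)
  have dec3 : ∀ a b : V, T.dist a b = 3 → ∃ m n, T.Adj a m ∧ T.Adj m n ∧ T.Adj n b := by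
    intro a b hdd
    obtain ⟨p, hp⟩ := (reach a b).exists_walk_length_eq_dist
    exact walk_len3 p (by omega)
  -- Step 1 : inr u, inr v ∈ S
  obtain ⟨hru, hrv⟩ := P1 u v hu hv (by omega)
  -- Step 2 : every inl member of S has its inr copy in S
  have toR : ∀ m : V, Sum.inl m ∈ S → Sum.inr m ∈ S := by
    intro m hm
    rcases le_or_gt 2 (T.dist u m) with h | h
    · obtain ⟨hna, hne⟩ := nadj h
      exact P5 u m hru hm hna hne
    · have hcm : T.dist m v = T.dist v m := SimpleGraph.dist_comm
      have h2 : 2 ≤ T.dist v m := by have := tri u m v; omega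
      obtain ⟨hna, hne⟩ := nadj h2
      exact P5 v m hrv hm hna hne
  -- Step 3 : produce an adjacent pair a,b of inl members of S
  have hd0 : T.dist x y ≠ 0 := fun h => hxy (conn.dist_eq_zero_iff.mp h)
  obtain ⟨a, b, hab, ha, hb⟩ :
      ∃ a b : V, T.Adj a b ∧ Sum.inl a ∈ S ∧ Sum.inl b ∈ S := by
    rcases (show T.dist x y = 1 ∨ T.dist x y = 2 ∨ T.dist x y = 3 by omega) with h | h | h
    · exact ⟨x, y, SimpleGraph.dist_eq_one_iff_adj.mp h, hx, hy⟩
    · obtain ⟨m, h1, h2⟩ := dec2 x y h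
      have hm := midM x y m hx hy h1 h2 (nadj (by omega)).1 hxy
      exact ⟨x, m, h1, hx, hm⟩
    · obtain ⟨q1, q2, h1, h2, h3⟩ := dec3 x y h
      obtain ⟨hq1, _⟩ := P3 x y q1 q2 hx hy h h1 h2 h3
      exact ⟨x, q1, h1, hx, hq1⟩
  have hra : Sum.inr a ∈ S := toR a ha
  have hrb : Sum.inr b ∈ S := toR b hb
  -- Step 4 : every inl member of S has an inl S-neighbor
  have edgeAt : ∀ z : V, Sum.inl z ∈ S → ∃ s, T.Adj z s ∧ Sum.inl s ∈ S := by
    intro z hz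
    rcases lt_or_ge (T.dist a z) 4 with hk | hk
    · have hcase : T.dist a z = 0 ∨ T.dist a z = 1 ∨ T.dist a z = 2 ∨ T.dist a z = 3 := by omega
      rcases hcase with h | h | h | h
      · have he : a = z := conn.dist_eq_zero_iff.mp h
        exact ⟨b, he ▸ hab, hb⟩
      · exact ⟨a, (SimpleGraph.dist_eq_one_iff_adj.mp h).symm, ha⟩
      · obtain ⟨m, h1, h2⟩ := dec2 a z h
        have hm := midM a z m ha hz h1 h2 (nadj (by omega)).1 (nadj (by omega)).2
        exact ⟨m, h2.symm, hm⟩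
      · obtain ⟨q1, q2, h1, h2, h3⟩ := dec3 a z h
        obtain ⟨_, hq2⟩ := P3 a z q1 q2 ha hz h h1 h2 h3
        exact ⟨q2, h3.symm, hq2⟩
    · obtain ⟨p, hp⟩ := (reach z a).exists_walk_length_eq_dist
      have hza : T.dist z a = T.dist a z := SimpleGraph.dist_comm
      cases p with
      | nil => rw [SimpleGraph.Walk.length_nil] at hp; omega
      | cons hadj q =>
        rename_i m'
        have hqlen : q.length + 1 = T.dist z a := by
          simpa [SimpleGraph.Walk.length_cons] using hp
        have h3 : T.dist m' a ≤ q.length := SimpleGraph.dist_le q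
        have h1 : T.dist z m' ≤ 1 := by simpa using SimpleGraph.dist_le hadj.toWalk
        have h2 := tri z m' a
        have hba : T.dist b a = 1 := adjd hab.symm
        have h5 := tri m' b a
        have h6 := tri m' a b
        have hma : 3 ≤ T.dist m' a := by omega
        have hmb : 2 ≤ T.dist m' b := by
          have hcab : T.dist a b = 1 := adjd hab
          omega
        obtain ⟨hna, hnea⟩ := nadj (by omega : 2 ≤ T.dist m' a)
        obtain ⟨hnb, hneb⟩ := nadj hmb
        have hrm' : Sum.inr m' ∈ S := P6 a b m' hra hrb hab hna hnb hnea hneb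
        have hm' : Sum.inl m' ∈ S := P4 m' z hrm' hz hadj.symm
        exact ⟨m', hadj, hm'⟩
  obtain ⟨u1, huu1, hu1⟩ := edgeAt u hu
  obtain ⟨v1, hvv1, hv1⟩ := edgeAt v hv
  have duu1 : T.dist u u1 = 1 := adjd huu1
  have dvv1 : T.dist v v1 = 1 := adjd hvv1
  have hru1 : Sum.inr u1 ∈ S := by
    have hc : T.dist u1 v = T.dist v u1 := SimpleGraph.dist_comm
    have ht := tri u u1 v
    obtain ⟨hna, hne⟩ := nadj (by omega : 2 ≤ T.dist v u1)
    exact P5 v u1 hrv hu1 hna hne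
  have hrv1 : Sum.inr v1 ∈ S := by
    have hc : T.dist v1 v = T.dist v v1 := SimpleGraph.dist_comm
    have ht := tri u v1 v
    obtain ⟨hna, hne⟩ := nadj (by omega : 2 ≤ T.dist u v1)
    exact P5 u v1 hru hv1 hna hne
  -- Step 5 : all inr's are in S
  have Rall : ∀ w : V, Sum.inr w ∈ S := by
    intro w
    by_cases c1 : T.Adj w u ∨ T.Adj w u1 ∨ w = u ∨ w = u1
    · by_cases c2 : T.Adj w v ∨ T.Adj w v1 ∨ w = v ∨ w = v1
      · have hcu : T.dist u w = T.dist w u := SimpleGraph.dist_comm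
        have hcv : T.dist w v = T.dist v w := SimpleGraph.dist_comm
        have dwu : T.dist w u ≤ 2 := by
          rcases c1 with h | h | h | h
          · have := adjd h; omega
          · have h1 := adjd h
            have h2 := tri w u1 u
            have h3 : T.dist u1 u = T.dist u u1 := SimpleGraph.dist_comm
            omega
          · simp [h, SimpleGraph.dist_self]
          · have h3 : T.dist u1 u = T.dist u u1 := SimpleGraph.dist_comm
            rw [h]
            omega
        have dwv : T.dist w v ≤ 2 := by
          rcases c2 with h | h | h | h
          · have := adjd h; omega
          · have h1 := adjd h
            have h2 := tri w v1 v
            have h3 : T.dist v1 v = T.dist v v1 := SimpleGraph.dist_comm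
            omega
          · simp [h, SimpleGraph.dist_self]
          · have h3 : T.dist v1 v = T.dist v v1 := SimpleGraph.dist_comm
            rw [h]
            omega
        have hsum := tri u w v
        have dwu2 : T.dist w u = 2 := by omega
        have dwv2 : T.dist w v = 2 := by omega
        have hwu1 : T.Adj w u1 := by
          rcases c1 with h | h | h | h
          · exfalso; have := adjd h; omega
          · exact h
          · exfalso; rw [h, SimpleGraph.dist_self] at dwu2; omega
          · exfalso
            have h3 : T.dist u1 u = T.dist u u1 := SimpleGraph.dist_comm
            rw [h] at dwu2
            omega
        have hwv1 : T.Adj w v1 := by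
          rcases c2 with h | h | h | h
          · exfalso; have := adjd h; omega
          · exact h
          · exfalso; rw [h, SimpleGraph.dist_self] at dwv2; omega
          · exfalso
            have h3 : T.dist v1 v = T.dist v v1 := SimpleGraph.dist_comm
            rw [h] at dwv2
            omega
        have hne11 : u1 ≠ v1 := by
          rintro rfl
          have h1 := tri u u1 v
          have h2 : T.dist u1 v = T.dist v u1 := SimpleGraph.dist_comm
          have h3 : T.dist v u1 = 1 := adjd hvv1
          omega
        have hnadj11 : ¬T.Adj u1 v1 := by
          intro h
          have h1 := tri u u1 v
          have h2 := tri u1 v1 v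
          have h3 := adjd h
          have h4 : T.dist v1 v = T.dist v v1 := SimpleGraph.dist_comm
          omega
        have hwM : Sum.inl w ∈ S := midM u1 v1 w hu1 hv1 hwu1.symm hwv1 hnadj11 hne11
        exact toR w hwM
      · push_neg at c2
        exact P6 v v1 w hrv hrv1 hvv1 c2.1 c2.2.1 c2.2.2.1 c2.2.2.2
    · push_neg at c1
      exact P6 u u1 w hru hru1 huu1 c1.1 c1.2.1 c1.2.2.1 c1.2.2.2
  -- Step 6 : all inl's are in S
  have Mall : ∀ c : V, Sum.inl c ∈ S := by
    have step : ∀ {c d : V}, T.Walk c d → Sum.inl c ∈ S → Sum.inl d ∈ S := by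
      intro c d p
      induction p with
      | nil => exact id
      | cons h q ih => exact fun hc => ih (P4 _ _ (Rall _) hc h.symm)
    intro c
    obtain ⟨p⟩ := reach a c
    exact step p ha
  exact hSp (Set.eq_univ_iff_forall.mpr (by rintro (c | c); exacts [Mall c, Rall c]))
end

section
/- Let T be a tree and x a vertex of T. Then the set N_T[x], viewed inside the complementary prism TT̄, is geodesically convex in TT̄, and the set of copies { v̄ : v ∈ N_T(x) } induces a clique in T̄. -/
open SimpleGraph

theorem stmt17 {V : Type*} [Fintype V] (T : SimpleGraph V) (hT : T.IsTree) (x : V) :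
    IsGeoConvex (compPrism T) (Sum.inl '' insert x (T.neighborSet x)) ∧
    (∀ a ∈ T.neighborSet x, ∀ b ∈ T.neighborSet x, a ≠ b → Tᶜ.Adj a b) := by
  have hac := hT.IsAcyclic
  -- key: any common neighbor of two distinct neighbors of x must be x
  have key : ∀ a ∈ T.neighborSet x, ∀ b ∈ T.neighborSet x, ∀ c, a ≠ b →
      T.Adj a c → T.Adj c b → c = x := by
    intro a ha b hb c hab h1 h2
    rw [mem_neighborSet] at ha hb
    have hpq := hac.path_unique
      (⟨.cons h1 (.cons h2 .nil), by simp [Walk.isPath_def, h1.ne, h2.ne, hab]⟩ : T.Path a b)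
      (⟨.cons ha.symm (.cons hb .nil), by simp [Walk.isPath_def, ha.ne', hb.ne, hab]⟩ : T.Path a b)
    have hsup := congrArg (fun q : T.Path a b => q.1.support) hpq
    simpa [Walk.support_cons] using hsup
  have part2 : ∀ a ∈ T.neighborSet x, ∀ b ∈ T.neighborSet x, a ≠ b → Tᶜ.Adj a b := by
    intro a ha b hb hab
    refine ⟨hab, fun hadj => ?_⟩
    rw [mem_neighborSet] at ha hb
    have hpq := hac.path_unique
      (⟨.cons hadj .nil, by simp [Walk.isPath_def, hadj.ne]⟩ : T.Path a b)
      (⟨.cons ha.symm (.cons hb .nil), by simp [Walk.isPath_def, ha.ne', hb.ne, hab]⟩ : T.Path a b)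
    rw [Subtype.mk_eq_mk] at hpq
    simpa using congrArg Walk.length hpq
  refine ⟨?_, part2⟩
  rintro u ⟨u', hu', rfl⟩ v ⟨v', hv', rfl⟩ w ⟨p, hp, hlen, hw⟩
  have adj_inl : ∀ a b : V, T.Adj a b → (compPrism T).Adj (Sum.inl a) (Sum.inl b) :=
    fun a b h => h
  -- distance between any two vertices of the set is at most 2
  have hd2 : (compPrism T).dist (Sum.inl u') (Sum.inl v') ≤ 2 := by
    rcases eq_or_ne u' v' with rfl | hne
    · rw [SimpleGraph.dist_self]; omega
    rcases hu' with rfl | hu' <;> rcases hv' with rfl | hv'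
    · exact absurd rfl hne
    · calc (compPrism T).dist (Sum.inl u') (Sum.inl v')
          ≤ (Walk.cons (adj_inl _ _ hv') .nil).length := SimpleGraph.dist_le _
        _ ≤ 2 := by simp
    · calc (compPrism T).dist (Sum.inl u') (Sum.inl v')
          ≤ (Walk.cons (adj_inl _ _ hu'.symm) .nil).length := SimpleGraph.dist_le _
        _ ≤ 2 := by simp
    · rw [mem_neighborSet] at hu' hv'
      calc (compPrism T).dist (Sum.inl u') (Sum.inl v')
          ≤ (Walk.cons (adj_inl _ _ hu'.symm) (Walk.cons (adj_inl _ _ hv') .nil)).length :=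
            SimpleGraph.dist_le _
        _ ≤ 2 := by simp
  have hlen2 : p.length ≤ 2 := hlen ▸ hd2
  cases p with
  | nil =>
    simp only [Walk.support_nil, List.mem_singleton] at hw
    exact ⟨u', hu', hw.symm⟩
  | cons h1 q =>
    cases q with
    | nil =>
      simp only [Walk.support_cons, Walk.support_nil, List.mem_cons,
        List.not_mem_nil, or_false] at hw
      rcases hw with rfl | rfl
      · exact ⟨u', hu', rfl⟩
      · exact ⟨v', hv', rfl⟩
    | cons h2 r =>
      cases r with
      | nil =>
        have hdist : (compPrism T).dist (Sum.inl u') (Sum.inl v') = 2 := by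
          simpa using hlen.symm
        have hne : u' ≠ v' := by
          rintro rfl
          rw [SimpleGraph.dist_self] at hdist
          exact two_ne_zero hdist.symm
        simp only [Walk.support_cons, Walk.support_nil, List.mem_cons,
          List.not_mem_nil, or_false] at hw
        rcases hw with rfl | rfl | rfl
        · exact ⟨u', hu', rfl⟩
        · -- w is the middle vertex
          clear hp hlen hlen2 hd2 hdist
          cases w with
          | inl c =>
            have h1' : T.Adj u' c := h1
            have h2' : T.Adj c v' := h2
            rcases hu' with rfl | hu'
            · exact ⟨c, Or.inr h1', rfl⟩
            rcases hv' with rfl | hv'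
            · exact ⟨c, Or.inr h2'.symm, rfl⟩
            have hcx := key u' hu' v' hv' c hne h1' h2'
            subst hcx
            exact ⟨c, Set.mem_insert _ _, rfl⟩
          | inr c =>
            have h1' : u' = c := h1
            have h2' : c = v' := h2
            exact absurd (h1'.trans h2') hne
        · exact ⟨v', hv', rfl⟩
      | cons h3 s =>
        simp [Walk.length_cons] at hlen2
end
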